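/- arXiv:1702.01281 — 6 statements merged into one kernel-verified Lean document; each statement's English description precedes it below -/
import Mathlib

section
/- Let β > 0, and let U and Ω be independent random variables on a probability space, with U uniformly distributed on [0,1] and Ω uniformly distributed on [-π,π]. Then the law of the random variable X = 2√(βU)·cos(Ω) is absolutely continuous with respect to Lebesgue measure on ℝ, with density x ↦ 𝟙[x ∈ [-2√β, 2√β]]·√(4β - x²)/(2πβ) (the Wigner semicircle density with parameter β). -/
open MeasureTheory Real Set
open scoped ENNReal


noncomputable def wsPhi (β : ℝ) (p : ℝ × ℝ) : ℝ × ℝ :=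
  (2 * Real.sqrt (β * p.1) * Real.cos p.2, 2 * Real.sqrt (β * p.1) * Real.sin p.2)

noncomputable def wsDer (β : ℝ) (p : ℝ × ℝ) : (ℝ × ℝ) →L[ℝ] (ℝ × ℝ) :=
  LinearMap.toContinuousLinearMap (Matrix.toLin (Module.Basis.finTwoProd ℝ) (Module.Basis.finTwoProd ℝ)
    !![β / Real.sqrt (β * p.1) * Real.cos p.2, -(2 * Real.sqrt (β * p.1)) * Real.sin p.2;
       β / Real.sqrt (β * p.1) * Real.sin p.2, 2 * Real.sqrt (β * p.1) * Real.cos p.2])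

theorem wsPhi_hasFDerivAt (β : ℝ) (hβ : 0 < β) (p : ℝ × ℝ) (hp : 0 < p.1) :
    HasFDerivAt (wsPhi β) (wsDer β p) p := by
  have h0 : β * p.1 ≠ 0 := by positivity
  have hr : HasDerivAt (fun u : ℝ => 2 * Real.sqrt (β * u)) (β / Real.sqrt (β * p.1)) p.1 := by
    have h1 : HasDerivAt (fun u : ℝ => β * u) β p.1 := by
      simpa using (hasDerivAt_id p.1).const_mul β
    have := ((Real.hasDerivAt_sqrt h0).comp p.1 h1).const_mul 2
    refine this.congr_deriv ?_
    have : Real.sqrt (β * p.1) ≠ 0 := Real.sqrt_ne_zero'.2 (by positivity)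
    field_simp
  unfold wsPhi wsDer
  rw [Matrix.toLin_finTwoProd_toContinuousLinearMap]
  refine HasFDerivAt.congr_fderiv (HasFDerivAt.prodMk
    ((hr.comp_hasFDerivAt p hasFDerivAt_fst).mul
      ((Real.hasDerivAt_cos p.2).comp_hasFDerivAt p (hasFDerivAt_snd (𝕜 := ℝ))))
    ((hr.comp_hasFDerivAt p hasFDerivAt_fst).mul
      ((Real.hasDerivAt_sin p.2).comp_hasFDerivAt p (hasFDerivAt_snd (𝕜 := ℝ))))) ?_
  simp [smul_smul, add_comm, mul_comm, neg_mul, smul_neg, neg_smul _ (ContinuousLinearMap.snd ℝ ℝ ℝ)]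

theorem wsDer_det (β : ℝ) (hβ : 0 < β) (p : ℝ × ℝ) (hp : 0 < p.1) :
    (wsDer β p).det = 2 * β := by
  have hs : Real.sqrt (β * p.1) ≠ 0 := Real.sqrt_ne_zero'.2 (by positivity)
  unfold wsDer
  simp only [LinearMap.det_toContinuousLinearMap, LinearMap.det_toLin, Matrix.det_fin_two_of]
  set s := Real.sqrt (β * p.1) with hsdef
  have h2 : sin p.2 ^ 2 + cos p.2 ^ 2 = 1 := Real.sin_sq_add_cos_sq p.2
  field_simp
  linear_combination h2
theorem wsPhi_injOn (β : ℝ) (hβ : 0 < β) :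
    Set.InjOn (wsPhi β) (Ioo (0:ℝ) 1 ×ˢ Ioo (-π) π) := by
  rintro p ⟨hp1, hp2⟩ q ⟨hq1, hq2⟩ h
  have h1 := congrArg Prod.fst h
  have h2 := congrArg Prod.snd h
  simp only [wsPhi] at h1 h2
  have hp : (2 * Real.sqrt (β * p.1)) ^ 2 = 4 * β * p.1 := by
    rw [mul_pow, Real.sq_sqrt (le_of_lt (mul_pos hβ hp1.1))]; ring
  have hq : (2 * Real.sqrt (β * q.1)) ^ 2 = 4 * β * q.1 := by
    rw [mul_pow, Real.sq_sqrt (le_of_lt (mul_pos hβ hq1.1))]; ring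
  have hp' : (2 * Real.sqrt (β * p.1) * Real.cos p.2) ^ 2
      + (2 * Real.sqrt (β * p.1) * Real.sin p.2) ^ 2 = 4 * β * p.1 := by
    linear_combination (2 * Real.sqrt (β * p.1)) ^ 2 * Real.sin_sq_add_cos_sq p.2 + hp
  have hq' : (2 * Real.sqrt (β * q.1) * Real.cos q.2) ^ 2
      + (2 * Real.sqrt (β * q.1) * Real.sin q.2) ^ 2 = 4 * β * q.1 := by
    linear_combination (2 * Real.sqrt (β * q.1)) ^ 2 * Real.sin_sq_add_cos_sq q.2 + hq
  have hsum : 4 * β * p.1 = 4 * β * q.1 := by rw [← hp', h1, h2, hq']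
  have hfst : p.1 = q.1 :=
    mul_left_cancel₀ (by positivity : (4:ℝ) * β ≠ 0) hsum
  have hrpos : (0:ℝ) < 2 * Real.sqrt (β * p.1) := by
    have h := mul_pos hβ hp1.1
    positivity
  rw [← hfst] at h1 h2
  have hcos : Real.cos p.2 = Real.cos q.2 := mul_left_cancel₀ (ne_of_gt hrpos) h1
  have hsin : Real.sin p.2 = Real.sin q.2 := mul_left_cancel₀ (ne_of_gt hrpos) h2
  have hsnd : p.2 = q.2 := by
    have a1 := Complex.arg_cos_add_sin_mul_I (θ := p.2) ⟨hp2.1, le_of_lt hp2.2⟩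
    have a2 := Complex.arg_cos_add_sin_mul_I (θ := q.2) ⟨hq2.1, le_of_lt hq2.2⟩
    rw [← a1, ← a2]
    congr 2
    · rw [← Complex.ofReal_cos, ← Complex.ofReal_cos, hcos]
    · rw [← Complex.ofReal_sin, ← Complex.ofReal_sin, hsin]
  exact Prod.ext hfst hsnd

theorem wsPhi_image (β : ℝ) (hβ : 0 < β) :
    {y : ℝ × ℝ | y.1 ^ 2 + y.2 ^ 2 < 4 * β ∧ ¬(y.2 = 0 ∧ y.1 ≤ 0)}
      ⊆ wsPhi β '' (Ioo (0:ℝ) 1 ×ˢ Ioo (-π) π) := by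
  rintro ⟨x, y⟩ ⟨hD, hslit⟩
  simp only at hD hslit
  set z : ℂ := Complex.mk x y with hz
  have hzre : z.re = x := rfl
  have hzim : z.im = y := rfl
  have hz0 : z ≠ 0 := by
    intro h
    apply hslit
    have : x = 0 ∧ y = 0 := by
      constructor
      · rw [← hzre, h]; rfl
      · rw [← hzim, h]; rfl
    exact ⟨this.2, le_of_eq this.1⟩
  have habs : ‖z‖ ^ 2 = x ^ 2 + y ^ 2 := by
    rw [Complex.sq_norm, Complex.normSq_apply, hzre, hzim]; ring
  have habspos : 0 < ‖z‖ := by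
    simpa using (norm_pos_iff.mpr hz0)
  set u : ℝ := (x ^ 2 + y ^ 2) / (4 * β) with hu
  have hu0 : 0 < u := by
    apply div_pos _ (by positivity)
    nlinarith [habspos, habs]
  have hu1 : u < 1 := by
    rw [hu, div_lt_one (by positivity)]
    exact hD
  have hsq : Real.sqrt (β * u) = ‖z‖ / 2 := by
    have : β * u = (‖z‖ / 2) ^ 2 := by
      rw [hu]; field_simp; nlinarith [habs]
    rw [this, Real.sqrt_sq (by positivity)]
  have hargπ : Complex.arg z < π := by
    rcases lt_or_eq_of_le (Complex.arg_le_pi z) with h | h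
    · exact h
    · exfalso
      rw [Complex.arg_eq_pi_iff] at h
      exact hslit ⟨by rw [← hzim]; exact h.2, by rw [← hzre]; exact le_of_lt h.1⟩
  refine ⟨(u, Complex.arg z), ⟨⟨hu0, hu1⟩, ⟨Complex.neg_pi_lt_arg z, hargπ⟩⟩, ?_⟩
  simp only [wsPhi]
  have hcos : Real.cos (Complex.arg z) = z.re / ‖z‖ := Complex.cos_arg hz0
  have hsin : Real.sin (Complex.arg z) = z.im / ‖z‖ := Complex.sin_arg z
  rw [hsq, hcos, hsin, hzre, hzim]
  have hab : ‖z‖ ≠ 0 := ne_of_gt habspos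
  rw [Prod.mk.injEq]
  constructor <;> field_simp


lemma ws_prod_smul {α β : Type*} [MeasurableSpace α] [MeasurableSpace β]
    (μ : Measure α) (ν : Measure β) [SFinite ν] (c : ℝ≥0∞) (hc : c ≠ ⊤) :
    μ.prod (c • ν) = c • (μ.prod ν) := by
  refine Measure.ext fun s hs => ?_
  rw [Measure.prod_apply hs, Measure.smul_apply, Measure.prod_apply hs, smul_eq_mul,
    ← lintegral_const_mul' _ _ hc]
  simp [Measure.smul_apply]

/-- The law of `X = 2√(βU)·cos(Ω)`, with `U ~ Unif[0,1]` and `Ω ~ Unif[-π,π]` independent,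
has the Wigner semicircle density with parameter `β`. -/
theorem wigner_semicircle_of_uniform
    {Ωs : Type*} [MeasurableSpace Ωs] {ℙ : Measure Ωs} [IsProbabilityMeasure ℙ]
    (β : ℝ) (hβ : 0 < β) (U W : Ωs → ℝ)
    (hUmeas : Measurable U) (hWmeas : Measurable W)
    (hU : pdf.IsUniform U (Set.Icc (0 : ℝ) 1) ℙ)
    (hW : pdf.IsUniform W (Set.Icc (-π) π) ℙ)
    (hindep : ProbabilityTheory.IndepFun U W ℙ) :
    Measure.map (fun ω => 2 * Real.sqrt (β * U ω) * Real.cos (W ω)) ℙ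
      = volume.withDensity (fun x => ENNReal.ofReal
          ((Set.Icc (-(2 * Real.sqrt β)) (2 * Real.sqrt β)).indicator
            (fun y => Real.sqrt (4 * β - y ^ 2) / (2 * π * β)) x)) := by
  have hπ : (0:ℝ) < π := Real.pi_pos
  set T : Set (ℝ × ℝ) := Icc (0:ℝ) 1 ×ˢ Icc (-π) π with hTdef
  set S : Set (ℝ × ℝ) := Ioo (0:ℝ) 1 ×ˢ Ioo (-π) π with hSdef
  set c : ℝ≥0∞ := ENNReal.ofReal (2 * π) with hcdef
  set g : ℝ × ℝ → ℝ := fun q => 2 * Real.sqrt (β * q.1) * Real.cos q.2 with hgdef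
  set D : Set (ℝ × ℝ) := {y : ℝ × ℝ | y.1 ^ 2 + y.2 ^ 2 < 4 * β} with hDdef
  have hgmeas : Measurable g := by
    apply Measurable.mul
    · exact (measurable_const.mul ((measurable_fst.const_mul β).sqrt))
    · exact measurable_snd.cos
  -- joint law
  have hmapU : Measure.map U ℙ = volume.restrict (Icc (0:ℝ) 1) := by
    have h : Measure.map U ℙ = (volume (Icc (0:ℝ) 1))⁻¹ • volume.restrict (Icc (0:ℝ) 1) := hU
    rw [h, Real.volume_Icc]
    norm_num
  have hmapW : Measure.map W ℙ = c⁻¹ • volume.restrict (Icc (-π) π) := by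
    have h : Measure.map W ℙ = (volume (Icc (-π) π))⁻¹ • volume.restrict (Icc (-π) π) := hW
    have h2 : π - -π = 2 * π := by ring
    rw [h, Real.volume_Icc, h2]
  have hpair : Measure.map (fun ω => (U ω, W ω)) ℙ = c⁻¹ • volume.restrict T := by
    rw [(ProbabilityTheory.indepFun_iff_map_prod_eq_prod_map_map hUmeas.aemeasurable
        hWmeas.aemeasurable).mp hindep, hmapU, hmapW,
      ws_prod_smul _ _ _ (ENNReal.inv_ne_top.mpr (by
        rw [hcdef, Ne, ENNReal.ofReal_eq_zero, not_le]; positivity)), Measure.prod_restrict, ← Measure.volume_eq_prod]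
  have hXc : (fun ω => 2 * Real.sqrt (β * U ω) * Real.cos (W ω))
      = g ∘ (fun ω => (U ω, W ω)) := rfl
  rw [hXc, ← Measure.map_map hgmeas (hUmeas.prodMk hWmeas), hpair, Measure.map_smul]
  -- T and S agree a.e.
  have hTS : T =ᵐ[volume] S := by
    rw [ae_eq_set]
    constructor
    · apply measure_mono_null (show T \ S ⊆ (({0,1} : Set ℝ) ×ˢ (univ : Set ℝ)) ∪
        ((univ : Set ℝ) ×ˢ ({-π, π} : Set ℝ)) from ?_)
      · apply measure_union_null
        · rw [Measure.volume_eq_prod, Measure.prod_prod]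
          have : (({0,1} : Set ℝ)).Finite := by simp
          rw [this.measure_zero, zero_mul]
        · rw [Measure.volume_eq_prod, Measure.prod_prod]
          have : (({-π,π} : Set ℝ)).Finite := by simp
          rw [this.measure_zero, mul_zero]
      · rintro ⟨x, y⟩ ⟨hxyT, hxyS⟩
        obtain ⟨hx, hy⟩ := hxyT
        simp only [hSdef, mem_prod, mem_Ioo, not_and_or] at hxyS
        simp only [mem_union, mem_prod, mem_univ, mem_insert_iff, mem_singleton_iff,
          true_and, and_true]
        rcases hxyS with h | h
        · left
          rcases h with h' | h'
          · left; exact le_antisymm (not_lt.mp h') hx.1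
          · right; exact le_antisymm hx.2 (not_lt.mp h')
        · right
          rcases h with h' | h'
          · left; exact le_antisymm (not_lt.mp h') hy.1
          · right; exact le_antisymm hy.2 (not_lt.mp h')
    · have hsub : S ⊆ T :=
        Set.prod_mono Set.Ioo_subset_Icc_self Set.Ioo_subset_Icc_self
      rw [Set.diff_eq_empty.mpr hsub]
      exact measure_empty
  have hSmeas : MeasurableSet S := measurableSet_Ioo.prod measurableSet_Ioo
  have hDmeas : MeasurableSet D :=
    measurableSet_lt ((measurable_fst.pow_const 2).add (measurable_snd.pow_const 2))
      measurable_const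
  have himD : wsPhi β '' S =ᵐ[volume] D := by
    rw [ae_eq_set]
    constructor
    · have hsub : wsPhi β '' S ⊆ D := by
        rintro y ⟨p, ⟨hp1, hp2⟩, rfl⟩
        have h1 : β * p.1 ≥ 0 := le_of_lt (mul_pos hβ hp1.1)
        simp only [hDdef, wsPhi, mem_setOf_eq]
        have : (2 * Real.sqrt (β * p.1) * Real.cos p.2) ^ 2
            + (2 * Real.sqrt (β * p.1) * Real.sin p.2) ^ 2 = 4 * β * p.1 := by
          have hsq : Real.sqrt (β * p.1) ^ 2 = β * p.1 := Real.sq_sqrt h1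
          linear_combination (4 * Real.cos p.2 ^ 2 + 4 * Real.sin p.2 ^ 2) * hsq
            + (4 * (β * p.1)) * Real.sin_sq_add_cos_sq p.2
        rw [this]
        nlinarith [hp1.2, hβ]
      rw [Set.diff_eq_empty.mpr hsub]
      exact measure_empty
    · apply measure_mono_null (show D \ wsPhi β '' S ⊆ (univ : Set ℝ) ×ˢ ({0} : Set ℝ) from ?_)
      · rw [Measure.volume_eq_prod, Measure.prod_prod]
        simp
      · rintro y ⟨hyD, hyIm⟩
        by_cases hslit : y.2 = 0 ∧ y.1 ≤ 0
        · exact ⟨trivial, hslit.1⟩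
        · exact absurd (wsPhi_image β hβ ⟨hyD, hslit⟩) hyIm
  -- now pointwise on measurable sets
  refine Measure.ext fun A hA => ?_
  set hfun : ℝ × ℝ → ℝ≥0∞ := fun y => A.indicator (fun _ => (1:ℝ≥0∞)) y.1 with hfdef
  have hderiv : ∀ p ∈ S, HasFDerivWithinAt (wsPhi β) (wsDer β p) S p := fun p hp =>
    (wsPhi_hasFDerivAt β hβ p hp.1.1).hasFDerivWithinAt
  have hCOV := lintegral_image_eq_lintegral_abs_det_fderiv_mul volume hSmeas hderiv
    (wsPhi_injOn β hβ) hfun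
  have h2β : ENNReal.ofReal (2 * β) ≠ 0 := by
    simp only [ne_eq, ENNReal.ofReal_eq_zero, not_le]; linarith
  have e2 : ∫⁻ p in S, ENNReal.ofReal |(wsDer β p).det| * hfun (wsPhi β p)
      = ENNReal.ofReal (2 * β) * ∫⁻ p in S, hfun (wsPhi β p) := by
    rw [← lintegral_const_mul' _ _ ENNReal.ofReal_ne_top]
    apply setLIntegral_congr_fun hSmeas
    intro p hp
    dsimp only
    rw [wsDer_det β hβ p hp.1.1, abs_of_pos (by linarith)]
  have e3 : ∫⁻ p in S, hfun (wsPhi β p)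
      = (ENNReal.ofReal (2 * β))⁻¹ * ∫⁻ y in wsPhi β '' S, hfun y := by
    rw [hCOV, e2, ← mul_assoc, ENNReal.inv_mul_cancel h2β ENNReal.ofReal_ne_top, one_mul]
  have e1 : (volume.restrict S) (g ⁻¹' A) = ∫⁻ p in S, hfun (wsPhi β p) := by
    rw [← lintegral_indicator_one (hgmeas hA)]
    apply lintegral_congr
    intro p
    by_cases hm : g p ∈ A <;>
      simp [Set.indicator_apply, hm, hfdef, wsPhi, Set.mem_preimage, Pi.one_apply, g]
  have sectvol : ∀ x : ℝ, volume {y : ℝ | x ^ 2 + y ^ 2 < 4 * β}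
      = ENNReal.ofReal (2 * Real.sqrt (4 * β - x ^ 2)) := by
    intro x
    have hset : {y : ℝ | x ^ 2 + y ^ 2 < 4 * β}
        = Ioo (-Real.sqrt (4 * β - x ^ 2)) (Real.sqrt (4 * β - x ^ 2)) := by
      ext y
      simp only [mem_setOf_eq, mem_Ioo, ← abs_lt]
      rw [Real.lt_sqrt (abs_nonneg y), sq_abs]
      constructor <;> intro h <;> linarith
    rw [hset, Real.volume_Ioo]
    congr 1
    ring
  have e5 : ∫⁻ y in D, hfun y
      = ∫⁻ x in A, ENNReal.ofReal (2 * Real.sqrt (4 * β - x ^ 2)) := by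
    have h1 : hfun = (Prod.fst ⁻¹' A).indicator (fun _ => (1:ℝ≥0∞)) := by
      funext y
      by_cases h : y.1 ∈ A <;> simp [hfdef, h, Set.indicator_apply, Set.mem_preimage]
    calc ∫⁻ y in D, hfun y = (volume.restrict D) (Prod.fst ⁻¹' A) := by
          rw [h1]; exact lintegral_indicator_one (measurable_fst hA)
      _ = volume ((Prod.fst ⁻¹' A) ∩ D) := Measure.restrict_apply (measurable_fst hA)
      _ = ∫⁻ x, volume (Prod.mk x ⁻¹' ((Prod.fst ⁻¹' A) ∩ D)) := by
          rw [Measure.volume_eq_prod, Measure.prod_apply (((measurable_fst hA)).inter hDmeas)]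
      _ = ∫⁻ x, A.indicator (fun x => ENNReal.ofReal (2 * Real.sqrt (4 * β - x ^ 2))) x := by
          apply lintegral_congr
          intro x
          by_cases hx : x ∈ A
          · have hsec : Prod.mk x ⁻¹' ((Prod.fst ⁻¹' A) ∩ D)
                = {y : ℝ | x ^ 2 + y ^ 2 < 4 * β} := by
              ext y
              simp [hDdef, hx, Set.mem_preimage]
            rw [hsec, sectvol x, Set.indicator_of_mem hx]
          · have hsec : Prod.mk x ⁻¹' ((Prod.fst ⁻¹' A) ∩ D) = (∅ : Set ℝ) := by
              ext y
              simp [hx, Set.mem_preimage]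
            rw [hsec, Set.indicator_of_notMem hx]
            simp
      _ = ∫⁻ x in A, ENNReal.ofReal (2 * Real.sqrt (4 * β - x ^ 2)) := by
          rw [lintegral_indicator hA]
  -- density identity
  have hdens : ∀ x : ℝ, ENNReal.ofReal
      ((Set.Icc (-(2 * Real.sqrt β)) (2 * Real.sqrt β)).indicator
        (fun y => Real.sqrt (4 * β - y ^ 2) / (2 * π * β)) x)
      = c⁻¹ * ((ENNReal.ofReal (2 * β))⁻¹ * ENNReal.ofReal (2 * Real.sqrt (4 * β - x ^ 2))) := by
    intro x
    rw [hcdef, ← ENNReal.ofReal_inv_of_pos (by positivity : (0:ℝ) < 2 * π),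
      ← ENNReal.ofReal_inv_of_pos (by positivity : (0:ℝ) < 2 * β),
      ← ENNReal.ofReal_mul (by positivity), ← ENNReal.ofReal_mul (by positivity)]
    congr 1
    by_cases hx : x ∈ Icc (-(2 * Real.sqrt β)) (2 * Real.sqrt β)
    · rw [Set.indicator_of_mem hx]
      field_simp
    · rw [Set.indicator_of_notMem hx]
      have h4 : (2 * Real.sqrt β) ^ 2 = 4 * β := by
        rw [mul_pow, Real.sq_sqrt hβ.le]; ring
      have hneg : 4 * β - x ^ 2 ≤ 0 := by
        simp only [mem_Icc, not_and_or, not_le] at hx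
        rcases hx with h | h
        · have h' : 2 * Real.sqrt β < -x := by linarith
          have h2 := mul_lt_mul'' h' h' (by positivity) (by positivity)
          nlinarith [h2, h4]
        · have h2 := mul_lt_mul'' h h (by positivity) (by positivity)
          nlinarith [h2, h4]
      rw [Real.sqrt_eq_zero_of_nonpos hneg]
      simp
  -- assemble
  rw [withDensity_apply _ hA, Measure.smul_apply, Measure.map_apply hgmeas hA,
    Measure.restrict_congr_set hTS, smul_eq_mul, e1, e3,
    Measure.restrict_congr_set himD, e5]
  calc c⁻¹ * ((ENNReal.ofReal (2 * β))⁻¹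
        * ∫⁻ x in A, ENNReal.ofReal (2 * Real.sqrt (4 * β - x ^ 2)))
      = ∫⁻ x in A, c⁻¹ * ((ENNReal.ofReal (2 * β))⁻¹
          * ENNReal.ofReal (2 * Real.sqrt (4 * β - x ^ 2))) := by
        rw [lintegral_const_mul' _ _ (ENNReal.inv_ne_top.mpr (by
            rw [hcdef, Ne, ENNReal.ofReal_eq_zero, not_le]; positivity)),
          lintegral_const_mul' _ _ (ENNReal.inv_ne_top.mpr h2β)]
    _ = ∫⁻ x in A, ENNReal.ofReal
          ((Set.Icc (-(2 * Real.sqrt β)) (2 * Real.sqrt β)).indicator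
            (fun y => Real.sqrt (4 * β - y ^ 2) / (2 * π * β)) x) := by
        apply lintegral_congr
        intro x
        rw [hdens x]
end

section
/- Let c₁ ∈ ℝ and c₂ > 0. The pushforward of the uniform probability measure on [-π,π] under the map ω ↦ c₁ + 2c₂·cos(ω) is absolutely continuous with respect to Lebesgue measure on ℝ, with density x ↦ 𝟙[x ∈ (c₁ - 2c₂, c₁ + 2c₂)]·1/(π√(4c₂² - (x - c₁)²)). -/
open MeasureTheory Real

/-- The pushforward of the uniform probability measure on `[-π, π]` under
`ω ↦ c₁ + 2c₂·cos ω` is the arcsine-type distribution on `(c₁ - 2c₂, c₁ + 2c₂)`. -/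
theorem shifted_arcsine_law_of_cos (c₁ c₂ : ℝ) (hc₂ : 0 < c₂) :
    Measure.map (fun ω : ℝ => c₁ + 2 * c₂ * Real.cos ω)
        ((volume (Set.Icc (-π) π))⁻¹ • volume.restrict (Set.Icc (-π) π))
      = volume.withDensity (fun x => ENNReal.ofReal
          ((Set.Ioo (c₁ - 2 * c₂) (c₁ + 2 * c₂)).indicator
            (fun y => 1 / (π * Real.sqrt (4 * c₂ ^ 2 - (y - c₁) ^ 2))) x)) := by
  have hπ := Real.pi_pos
  set φ : ℝ → ℝ := fun ω => c₁ + 2 * c₂ * Real.cos ω with hφ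
  set dens : ℝ → ℝ := fun y => 1 / (π * Real.sqrt (4 * c₂ ^ 2 - (y - c₁) ^ 2)) with hdens
  have hφm : Measurable φ := by fun_prop
  -- image of (0, π) under φ
  have himg : φ '' Set.Ioo 0 π = Set.Ioo (c₁ - 2 * c₂) (c₁ + 2 * c₂) := by
    ext x
    constructor
    · rintro ⟨ω, ⟨h0, hpi⟩, rfl⟩
      have h1 : Real.cos ω < 1 := by
        have := Real.strictAntiOn_cos (Set.left_mem_Icc.2 hπ.le) ⟨h0.le, hpi.le⟩ h0
        simpa using this
      have h2 : -1 < Real.cos ω := by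
        have := Real.strictAntiOn_cos ⟨h0.le, hpi.le⟩ (Set.right_mem_Icc.2 hπ.le) hpi
        simpa using this
      exact ⟨by simp only [hφ]; nlinarith, by simp only [hφ]; nlinarith⟩
    · rintro ⟨hx1, hx2⟩
      set t := (x - c₁) / (2 * c₂) with ht
      have h2c : (0:ℝ) < 2 * c₂ := by linarith
      have ht1 : -1 < t := by rw [ht, lt_div_iff₀ h2c]; linarith
      have ht2 : t < 1 := by rw [ht, div_lt_iff₀ h2c]; linarith
      refine ⟨Real.arccos t, ⟨Real.arccos_pos.2 ht2, ?_⟩, ?_⟩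
      · exact lt_of_le_of_ne (Real.arccos_le_pi t)
          fun h => absurd (Real.arccos_eq_pi.1 h) (by linarith)
      · simp only [hφ]
        rw [Real.cos_arccos ht1.le ht2.le, ht]
        field_simp
        ring
  have hinj : Set.InjOn φ (Set.Ioo 0 π) := by
    intro a ha b hb h
    have h2c : (2 * c₂) ≠ 0 := by positivity
    have : Real.cos a = Real.cos b := by
      simp only [hφ] at h
      have := add_left_cancel h
      exact mul_left_cancel₀ h2c this
    exact Real.injOn_cos ⟨ha.1.le, ha.2.le⟩ ⟨hb.1.le, hb.2.le⟩ this
  have hder : ∀ ω ∈ Set.Ioo (0:ℝ) π, HasFDerivWithinAt φ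
      ((1 : ℝ →L[ℝ] ℝ).smulRight (2 * c₂ * (-Real.sin ω))) (Set.Ioo 0 π) ω := by
    intro ω _
    have : HasDerivAt φ (2 * c₂ * (-Real.sin ω)) ω := by
      simpa [hφ] using ((Real.hasDerivAt_cos ω).const_mul (2 * c₂)).const_add c₁
    exact this.hasDerivWithinAt.hasFDerivWithinAt
  refine Measure.ext fun A hA => ?_
  set B := φ ⁻¹' A with hBdef
  have hB : MeasurableSet B := hφm hA
  -- LHS
  rw [Measure.map_apply hφm hA, Measure.smul_apply, Measure.restrict_apply hB, smul_eq_mul]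
  -- symmetry: measure of B ∩ [-π, π] = 2 * measure of B ∩ (0, π)
  have hnegB : Neg.neg ⁻¹' B = B := by
    ext ω
    simp [hBdef, hφ, Real.cos_neg]
  have hIcc : volume (B ∩ Set.Icc 0 π) = volume (B ∩ Set.Ioo 0 π) := by
    refine measure_congr ?_
    exact (Filter.EventuallyEq.refl _ _).inter (Ioo_ae_eq_Icc).symm
  have hIoc : volume (B ∩ Set.Ioc 0 π) = volume (B ∩ Set.Ioo 0 π) := by
    refine measure_congr ?_
    exact (Filter.EventuallyEq.refl _ _).inter (Ioo_ae_eq_Ioc).symm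
  have hneg : volume (B ∩ Set.Icc (-π) 0) = volume (B ∩ Set.Icc 0 π) := by
    have hpre : Neg.neg ⁻¹' (B ∩ Set.Icc (0:ℝ) π) = B ∩ Set.Icc (-π) 0 := by
      rw [Set.preimage_inter, hnegB]
      congr 1
      ext ω
      simp only [Set.mem_preimage, Set.mem_Icc]
      constructor <;> intro h <;> constructor <;> linarith [h.1, h.2]
    rw [← hpre, Measure.measure_preimage_neg]
  have hsplit : volume (B ∩ Set.Icc (-π) π)
      = volume (B ∩ Set.Icc (-π) 0) + volume (B ∩ Set.Ioc 0 π) := by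
    rw [← measure_union ?_ (hB.inter measurableSet_Ioc)]
    · congr 1
      rw [← Set.inter_union_distrib_left, Set.Icc_union_Ioc_eq_Icc (by linarith) hπ.le]
    · exact (Set.Iic_disjoint_Ioc le_rfl).mono (Set.inter_subset_right.trans Set.Icc_subset_Iic_self) Set.inter_subset_right
  have hsym : volume (B ∩ Set.Icc (-π) π) = 2 * volume (B ∩ Set.Ioo 0 π) := by
    rw [hsplit, hneg, hIcc, hIoc, two_mul]
  rw [hsym]
  -- RHS
  have hindE : (fun x => ENNReal.ofReal ((Set.Ioo (c₁ - 2 * c₂) (c₁ + 2 * c₂)).indicator dens x))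
      = fun x => (Set.Ioo (c₁ - 2 * c₂) (c₁ + 2 * c₂)).indicator
          (fun x => ENNReal.ofReal (dens x)) x := by
    funext x
    by_cases hx : x ∈ Set.Ioo (c₁ - 2 * c₂) (c₁ + 2 * c₂) <;> simp [Set.indicator, hx]
  rw [withDensity_apply _ hA, hindE, lintegral_indicator measurableSet_Ioo _,
    Measure.restrict_restrict measurableSet_Ioo, ← himg]
  have hswap : ∫⁻ x in φ '' Set.Ioo 0 π ∩ A, ENNReal.ofReal (dens x)
      = ∫⁻ x in φ '' Set.Ioo 0 π, A.indicator (fun x => ENNReal.ofReal (dens x)) x := by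
    rw [lintegral_indicator hA _, Measure.restrict_restrict hA, Set.inter_comm]
  rw [hswap, lintegral_image_eq_lintegral_abs_det_fderiv_mul volume measurableSet_Ioo hder hinj]
  have hpt : ∀ ω ∈ Set.Ioo (0:ℝ) π,
      ENNReal.ofReal |(((1 : ℝ →L[ℝ] ℝ).smulRight (2 * c₂ * (-Real.sin ω))).det)|
        * A.indicator (fun x => ENNReal.ofReal (dens x)) (φ ω)
      = B.indicator (fun _ => ENNReal.ofReal (1 / π)) ω := by
    intro ω hω
    have hsin : 0 < Real.sin ω := Real.sin_pos_of_pos_of_lt_pi hω.1 hω.2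
    rw [ContinuousLinearMap.smulRight_one_eq_toSpanSingleton, ContinuousLinearMap.det_toSpanSingleton]
    by_cases hmem : φ ω ∈ A
    · have hωB : ω ∈ B := hmem
      rw [Set.indicator_of_mem hmem, Set.indicator_of_mem hωB]
      have habs : |2 * c₂ * (-Real.sin ω)| = 2 * c₂ * Real.sin ω := by
        rw [abs_of_nonpos (by nlinarith)]; ring
      have hsq : 4 * c₂ ^ 2 - (φ ω - c₁) ^ 2 = (2 * c₂ * Real.sin ω) ^ 2 := by
        have := Real.sin_sq_add_cos_sq ω
        simp only [hφ]
        nlinarith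
      have hsqrt : Real.sqrt (4 * c₂ ^ 2 - (φ ω - c₁) ^ 2) = 2 * c₂ * Real.sin ω := by
        rw [hsq, Real.sqrt_sq (by positivity)]
      rw [habs, hdens]
      simp only
      rw [hsqrt, ← ENNReal.ofReal_mul (by positivity)]
      congr 1
      have h1 : (2 * c₂ * Real.sin ω) ≠ 0 := by positivity
      field_simp
    · have hωB : ω ∉ B := hmem
      rw [Set.indicator_of_notMem hmem, Set.indicator_of_notMem hωB, mul_zero]
  rw [setLIntegral_congr_fun measurableSet_Ioo hpt,
    lintegral_indicator hB _, Measure.restrict_restrict hB, setLIntegral_const]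
  -- coefficient identity
  rw [Real.volume_Icc]
  have hcoef : (ENNReal.ofReal (π - -π))⁻¹ * 2 = ENNReal.ofReal (1 / π) := by
    have h2π : π - -π = 2 * π := by ring
    rw [h2π, ENNReal.ofReal_mul (by norm_num), ENNReal.ofReal_ofNat,
      ENNReal.mul_inv (Or.inl (by norm_num)) (Or.inl (by norm_num)),
      one_div, ENNReal.ofReal_inv_of_pos hπ]
    rw [mul_comm, ← mul_assoc, ENNReal.mul_inv_cancel (by norm_num) (by norm_num), one_mul]
  calc (ENNReal.ofReal (π - -π))⁻¹ * (2 * volume (B ∩ Set.Ioo 0 π))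
      = ((ENNReal.ofReal (π - -π))⁻¹ * 2) * volume (B ∩ Set.Ioo 0 π) := by ring
    _ = ENNReal.ofReal (1 / π) * volume (B ∩ Set.Ioo 0 π) := by rw [hcoef]
end

section
/- Let (X_n)_{n≥1} be a sequence of independent real random variables, where X_n has the Gamma distribution with shape parameter a_n > 0 and rate 1, and suppose a_n/n → c for some c > 0 as n → ∞. Then X_n/n → c almost surely as n → ∞. -/
open MeasureTheory ProbabilityTheory Filter Real Set
open scoped ENNReal NNReal

lemma gamma_lintegral_exp {a t : ℝ} (ha : 0 < a) (ht : t < 1) :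
    ∫⁻ x, ENNReal.ofReal (Real.exp (t * x)) ∂(gammaMeasure a 1) =
      ENNReal.ofReal ((1 - t) ^ (-a)) := by
  have hr : 0 < 1 - t := by linarith
  have hmeas : Measurable (fun x : ℝ => ENNReal.ofReal (Real.exp (t * x))) :=
    (measurable_id'.const_mul t).exp.ennreal_ofReal
  have hpdf : Measurable (gammaPDF a 1) := (measurable_gammaPDFReal a 1).ennreal_ofReal
  rw [gammaMeasure, lintegral_withDensity_eq_lintegral_mul _ hpdf hmeas]
  have hsplit : ∫⁻ x, (gammaPDF a 1 * fun x => ENNReal.ofReal (Real.exp (t * x))) x =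
      ∫⁻ x in Ioi (0:ℝ),
        ENNReal.ofReal (1 / Real.Gamma a * (x ^ (a-1) * Real.exp (-((1-t) * x)))) := by
    rw [← lintegral_add_compl _ measurableSet_Ici (μ := volume), compl_Ici]
    have h1 : ∫⁻ x in Iio (0:ℝ),
        (gammaPDF a 1 * fun x => ENNReal.ofReal (Real.exp (t * x))) x = 0 := by
      rw [setLIntegral_congr_fun (g := fun _ => 0) measurableSet_Iio]
      · simp
      · exact fun x (hx : x < 0) => by
          simp [gammaPDF_of_neg hx]
    rw [h1, add_zero, ← MeasureTheory.restrict_Ioi_eq_restrict_Ici]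
    refine setLIntegral_congr_fun measurableSet_Ioi (fun x (hx : 0 < x) => ?_)
    rw [Pi.mul_apply, gammaPDF_of_nonneg hx.le, ← ENNReal.ofReal_mul (by positivity)]
    congr 1
    rw [Real.one_rpow, mul_assoc, mul_assoc, ← Real.exp_add]
    ring_nf
  rw [hsplit]
  have hint : IntegrableOn
      (fun x : ℝ => 1 / Real.Gamma a * (x ^ (a-1) * Real.exp (-((1-t) * x)))) (Ioi 0) := by
    apply Integrable.const_mul
    have hG := Real.GammaIntegral_convergent ha
    have h2 : IntegrableOn (fun x : ℝ => Real.exp (-((1-t)*x)) * ((1-t)*x) ^ (a-1)) (Ioi 0) := by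
      have := (integrableOn_Ioi_comp_mul_left_iff
        (fun x : ℝ => Real.exp (-x) * x ^ (a-1)) 0 hr).2 (by simpa using hG)
      simpa using this
    have h3 : IntegrableOn
        (fun x : ℝ => ((1-t) ^ (a-1))⁻¹ * (Real.exp (-((1-t)*x)) * ((1-t)*x) ^ (a-1)))
        (Ioi 0) := h2.const_mul _
    refine h3.congr_fun (fun x hx => ?_) measurableSet_Ioi
    have hx' : (0:ℝ) < x := hx
    beta_reduce
    rw [Real.mul_rpow hr.le hx'.le]
    field_simp [(Real.rpow_pos_of_pos hr (a-1)).ne']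
  rw [← ofReal_integral_eq_lintegral_ofReal hint
    ((ae_restrict_iff' measurableSet_Ioi).2 (ae_of_all _ fun x (hx : 0 < x) => by positivity))]
  congr 1
  simp_rw [← mul_assoc, mul_assoc (1 / Real.Gamma a)]
  rw [integral_const_mul, integral_rpow_mul_exp_neg_mul_Ioi ha hr]
  rw [one_div, Real.rpow_neg hr.le, ← Real.inv_rpow hr.le]
  field_simp [(Real.Gamma_pos_of_pos ha).ne']


lemma gamma_chernoff_upper {a t u : ℝ} (ha : 0 < a) (ht0 : 0 < t) (ht1 : t < 1) :
    gammaMeasure a 1 {x | u ≤ x} ≤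
      ENNReal.ofReal (Real.exp (-(t * u)) * (1 - t) ^ (-a)) := by
  have : IsProbabilityMeasure (gammaMeasure a 1) := isProbabilityMeasure_gammaMeasure ha one_pos
  have hmeas : AEMeasurable (fun x : ℝ => ENNReal.ofReal (Real.exp (t * x)))
      (gammaMeasure a 1) := ((measurable_id'.const_mul t).exp.ennreal_ofReal).aemeasurable
  have key := mul_meas_ge_le_lintegral₀ hmeas (ENNReal.ofReal (Real.exp (t * u)))
  rw [gamma_lintegral_exp ha ht1] at key
  have hset : {x : ℝ | ENNReal.ofReal (Real.exp (t * u)) ≤ ENNReal.ofReal (Real.exp (t * x))}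
      = {x : ℝ | u ≤ x} := by
    ext x
    simp only [Set.mem_setOf_eq, ENNReal.ofReal_le_ofReal_iff (Real.exp_pos _).le,
      Real.exp_le_exp]
    exact mul_le_mul_iff_right₀ ht0
  rw [hset] at key
  have hε0 : ENNReal.ofReal (Real.exp (t * u)) ≠ 0 := by
    simp [ENNReal.ofReal_eq_zero, (Real.exp_pos _).not_ge]
  calc gammaMeasure a 1 {x | u ≤ x}
      = (ENNReal.ofReal (Real.exp (t * u)))⁻¹ *
        (ENNReal.ofReal (Real.exp (t * u)) * gammaMeasure a 1 {x | u ≤ x}) := by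
        rw [← mul_assoc, ENNReal.inv_mul_cancel hε0 ENNReal.ofReal_ne_top, one_mul]
    _ ≤ (ENNReal.ofReal (Real.exp (t * u)))⁻¹ * ENNReal.ofReal ((1 - t) ^ (-a)) :=
        mul_le_mul_right key _
    _ = ENNReal.ofReal (Real.exp (-(t * u)) * (1 - t) ^ (-a)) := by
        rw [← ENNReal.ofReal_inv_of_pos (Real.exp_pos _), ← Real.exp_neg,
          ← ENNReal.ofReal_mul (Real.exp_pos _).le]

lemma gamma_chernoff_lower {a t l : ℝ} (ha : 0 < a) (ht0 : 0 < t) :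
    gammaMeasure a 1 {x | x ≤ l} ≤
      ENNReal.ofReal (Real.exp (t * l) * (1 + t) ^ (-a)) := by
  have : IsProbabilityMeasure (gammaMeasure a 1) := isProbabilityMeasure_gammaMeasure ha one_pos
  have hmeas : AEMeasurable (fun x : ℝ => ENNReal.ofReal (Real.exp (-t * x)))
      (gammaMeasure a 1) := ((measurable_id'.const_mul (-t)).exp.ennreal_ofReal).aemeasurable
  have key := mul_meas_ge_le_lintegral₀ hmeas (ENNReal.ofReal (Real.exp (-t * l)))
  rw [gamma_lintegral_exp ha (by linarith)] at key
  have h1 : (1 : ℝ) - -t = 1 + t := by ring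
  rw [h1] at key
  have hset : {x : ℝ | ENNReal.ofReal (Real.exp (-t * l)) ≤ ENNReal.ofReal (Real.exp (-t * x))}
      = {x : ℝ | x ≤ l} := by
    ext x
    simp only [Set.mem_setOf_eq, ENNReal.ofReal_le_ofReal_iff (Real.exp_pos _).le,
      Real.exp_le_exp, neg_mul]
    constructor
    · intro h; nlinarith
    · intro h; nlinarith
  rw [hset] at key
  have hε0 : ENNReal.ofReal (Real.exp (-t * l)) ≠ 0 := by
    simp [ENNReal.ofReal_eq_zero, (Real.exp_pos _).not_ge]
  calc gammaMeasure a 1 {x | x ≤ l}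
      = (ENNReal.ofReal (Real.exp (-t * l)))⁻¹ *
        (ENNReal.ofReal (Real.exp (-t * l)) * gammaMeasure a 1 {x | x ≤ l}) := by
        rw [← mul_assoc, ENNReal.inv_mul_cancel hε0 ENNReal.ofReal_ne_top, one_mul]
    _ ≤ (ENNReal.ofReal (Real.exp (-t * l)))⁻¹ * ENNReal.ofReal ((1 + t) ^ (-a)) :=
        mul_le_mul_right key _
    _ = ENNReal.ofReal (Real.exp (t * l) * (1 + t) ^ (-a)) := by
        rw [← ENNReal.ofReal_inv_of_pos (Real.exp_pos _), ← Real.exp_neg,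
          ← ENNReal.ofReal_mul (Real.exp_pos _).le, neg_mul, neg_neg]

lemma tsum_ne_top_of_eventually_exp {f : ℕ → ℝ≥0∞} (hf1 : ∀ n, f n ≤ 1)
    {β : ℝ} (hβ : 0 < β) {N : ℕ}
    (h : ∀ n, N ≤ n → f n ≤ ENNReal.ofReal (Real.exp (-β * n))) :
    ∑' n, f n ≠ ⊤ := by
  have hbound : ∀ n, f n ≤ ENNReal.ofReal (Real.exp (β * N) * Real.exp (-β) ^ n) := by
    intro n
    rw [← Real.exp_nat_mul, ← Real.exp_add]
    rcases le_or_gt N n with hn | hn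
    · refine (h n hn).trans (ENNReal.ofReal_le_ofReal (Real.exp_le_exp.2 ?_))
      have : (0:ℝ) ≤ β * N := by positivity
      nlinarith
    · refine (hf1 n).trans ?_
      rw [← ENNReal.ofReal_one]
      refine ENNReal.ofReal_le_ofReal (Real.one_le_exp ?_)
      have hn' : (n:ℝ) ≤ N := by exact_mod_cast hn.le
      nlinarith
  have hsum : Summable (fun n : ℕ => Real.exp (β * N) * Real.exp (-β) ^ n) :=
    (summable_geometric_of_lt_one (Real.exp_pos _).le
      (Real.exp_lt_one_iff.2 (by linarith))).mul_left _
  refine ne_top_of_le_ne_top ?_ (ENNReal.tsum_le_tsum hbound)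
  rw [← ENNReal.ofReal_tsum_of_nonneg (fun n => by positivity) hsum]
  exact ENNReal.ofReal_ne_top

set_option maxHeartbeats 1000000 in
lemma gamma_key {Ω : Type*} [MeasurableSpace Ω] (P : Measure Ω) [IsProbabilityMeasure P]
    (a : ℕ → ℝ) (ha : ∀ n, 0 < a n) (c : ℝ) (hc : 0 < c)
    (halim : Tendsto (fun n : ℕ => a n / n) atTop (nhds c))
    (X : ℕ → Ω → ℝ) (hXmeas : ∀ n, Measurable (X n))
    (hlaw : ∀ n, Measure.map (X n) P = gammaMeasure (a n) 1)
    {ε : ℝ} (hε : 0 < ε) :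
    ∀ᵐ ω ∂P, ∀ᶠ n in atTop, |X n ω / n - c| < ε := by
  have hcε : 0 < c + ε := by linarith
  set t : ℝ := ε / (4 * (c + ε)) with htdef
  set s : ℝ := ε / (4 * c) with hsdef
  have ht0 : 0 < t := by positivity
  have htv : t * (c + ε) = ε / 4 := by rw [htdef]; field_simp
  have ht1 : t < 1 := by rw [htdef, div_lt_one (by positivity)]; linarith
  have h1t : 0 < 1 - t := by linarith
  have hs0 : 0 < s := by positivity
  have hsv : s * c = ε / 4 := by rw [hsdef]; field_simp
  have h1s : (0:ℝ) < 1 + s := by linarith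
  -- log bounds
  have hA : -Real.log (1 - t) ≤ (1 - t)⁻¹ - 1 := by
    have := Real.log_le_sub_one_of_pos (inv_pos.2 h1t)
    rwa [Real.log_inv] at this
  have hA0 : 0 ≤ -Real.log (1 - t) := by
    rw [neg_nonneg]
    exact Real.log_nonpos (by linarith) (by linarith)
  have hl1 : 1 - (1 + s)⁻¹ ≤ Real.log (1 + s) := by
    have := Real.log_le_sub_one_of_pos (inv_pos.2 h1s)
    rw [Real.log_inv] at this
    linarith
  have hl2 : Real.log (1 + s) ≤ s := by
    have := Real.log_le_sub_one_of_pos h1s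
    linarith
  have hl0 : 0 ≤ Real.log (1 + s) := Real.log_nonneg (by linarith)
  -- exponents
  set β₁ : ℝ := t * (c + ε) - (c + ε / 2) * ((1 - t)⁻¹ - 1) with hβ₁def
  set β₂ : ℝ := (c - ε / 2) * Real.log (1 + s) - s * (c - ε) with hβ₂def
  have hq : (1 - t) * ((1 - t)⁻¹ - 1) = t := by field_simp; ring
  have hβ₁ : 0 < β₁ := by
    rw [hβ₁def]
    have h : (c + ε / 2) * ((1 - t)⁻¹ - 1) * (1 - t) = (c + ε / 2) * t := by
      field_simp; ring
    nlinarith [mul_pos ht0 hε, htv, ht1, ht0, hε, hc]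
  have hβ₂ : 0 < β₂ := by
    rw [hβ₂def]
    rcases le_or_gt 0 (c - ε / 2) with hce | hce
    · have h1 : (1 + s) * (1 - (1 + s)⁻¹) = s := by field_simp; ring
      have h2 : (c - ε / 2) * (1 - (1 + s)⁻¹) ≤ (c - ε / 2) * Real.log (1 + s) :=
        mul_le_mul_of_nonneg_left hl1 hce
      nlinarith [mul_pos hs0 hε, hsv, hs0, hε, hc, mul_pos hs0 hs0]
    · have h2 : (c - ε / 2) * s ≤ (c - ε / 2) * Real.log (1 + s) := by nlinarith
      nlinarith [mul_pos hs0 hε]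
  -- eventual bounds on a n
  obtain ⟨N₀, hN₀⟩ := Metric.tendsto_atTop.1 halim (ε / 2) (by positivity)
  set N := max N₀ 1 with hNdef
  have hNa : ∀ n, N ≤ n → a n ≤ (c + ε / 2) * n ∧ (c - ε / 2) * n ≤ a n := by
    intro n hn
    have hn1 : 1 ≤ n := le_trans (le_max_right _ _) hn
    have hn0 : (0:ℝ) < n := by exact_mod_cast hn1
    have := hN₀ n (le_trans (le_max_left _ _) hn)
    rw [Real.dist_eq, abs_lt] at this
    constructor
    · linarith [(div_lt_iff₀ hn0).1 (by linarith : a n / n < c + ε / 2)]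
    · linarith [(lt_div_iff₀ hn0).1 (by linarith : c - ε / 2 < a n / n)]
  -- tail bounds
  have hE : ∀ n, N ≤ n → P {ω | (c + ε) * n ≤ X n ω} ≤
      ENNReal.ofReal (Real.exp (-β₁ * n)) := by
    intro n hn
    have hmap : P {ω | (c + ε) * n ≤ X n ω} = gammaMeasure (a n) 1 {x | (c + ε) * n ≤ x} := by
      have h := Measure.map_apply (μ := P) (hXmeas n) (measurableSet_Ici (a := (c + ε) * (n:ℝ)))
      rw [hlaw n] at h
      exact h.symm
    rw [hmap]
    refine (gamma_chernoff_upper (ha n) ht0 ht1).trans (ENNReal.ofReal_le_ofReal ?_)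
    rw [Real.rpow_def_of_pos h1t, ← Real.exp_add, Real.exp_le_exp]
    have hup := (hNa n hn).1
    have hn0 : (0:ℝ) ≤ n := Nat.cast_nonneg n
    have h3 : (-Real.log (1 - t)) * a n ≤ ((1 - t)⁻¹ - 1) * ((c + ε / 2) * n) := by
      calc (-Real.log (1 - t)) * a n ≤ (-Real.log (1 - t)) * ((c + ε / 2) * n) :=
            mul_le_mul_of_nonneg_left hup hA0
        _ ≤ ((1 - t)⁻¹ - 1) * ((c + ε / 2) * n) := by
            refine mul_le_mul_of_nonneg_right hA ?_
            positivity
    rw [hβ₁def] at *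
    nlinarith [h3]
  have hF : ∀ n, N ≤ n → P {ω | X n ω ≤ (c - ε) * n} ≤
      ENNReal.ofReal (Real.exp (-β₂ * n)) := by
    intro n hn
    have hmap : P {ω | X n ω ≤ (c - ε) * n} = gammaMeasure (a n) 1 {x | x ≤ (c - ε) * n} := by
      have h := Measure.map_apply (μ := P) (hXmeas n) (measurableSet_Iic (a := (c - ε) * (n:ℝ)))
      rw [hlaw n] at h
      exact h.symm
    rw [hmap]
    refine (gamma_chernoff_lower (ha n) hs0).trans (ENNReal.ofReal_le_ofReal ?_)
    rw [Real.rpow_def_of_pos h1s, ← Real.exp_add, Real.exp_le_exp]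
    have hlo := (hNa n hn).2
    have hn0 : (0:ℝ) ≤ n := Nat.cast_nonneg n
    have h3 : Real.log (1 + s) * (c - ε / 2) * n ≤ Real.log (1 + s) * a n :=
      by nlinarith [mul_le_mul_of_nonneg_left hlo hl0]
    rw [hβ₂def] at *
    nlinarith [h3]
  -- Borel-Cantelli
  have hsum : ∑' n, P ({ω | (c + ε) * n ≤ X n ω} ∪ {ω | X n ω ≤ (c - ε) * n}) ≠ ⊤ := by
    refine ne_top_of_le_ne_top ?_
      ((ENNReal.tsum_le_tsum fun n => measure_union_le _ _).trans_eq ENNReal.tsum_add)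
    exact ENNReal.add_ne_top.2
      ⟨tsum_ne_top_of_eventually_exp (fun n => prob_le_one) hβ₁ hE,
       tsum_ne_top_of_eventually_exp (fun n => prob_le_one) hβ₂ hF⟩
  filter_upwards [ae_eventually_notMem hsum] with ω hω
  filter_upwards [hω, eventually_ge_atTop N] with n hn hnN
  simp only [Set.mem_union, Set.mem_setOf_eq, not_or, not_le] at hn
  have hn1 : 1 ≤ n := le_trans (le_max_right _ _) hnN
  have hn0 : (0:ℝ) < n := by exact_mod_cast hn1
  rw [abs_lt]
  constructor
  · have := hn.2
    rw [neg_lt, ← sub_lt_iff_lt_add'] at *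
    nlinarith [(lt_div_iff₀ hn0).2 hn.2]
  · nlinarith [(div_lt_iff₀ hn0).2 hn.1]

/-- If `(X n)` are independent with `X n ~ Gamma(aₙ, 1)` and `aₙ/n → c > 0`,
then `X n / n → c` almost surely. -/
theorem gamma_div_n_tendsto_ae
    {Ω : Type*} [MeasurableSpace Ω] (P : Measure Ω) [IsProbabilityMeasure P]
    (a : ℕ → ℝ) (ha : ∀ n, 0 < a n) (c : ℝ) (hc : 0 < c)
    (halim : Tendsto (fun n : ℕ => a n / n) atTop (nhds c))
    (X : ℕ → Ω → ℝ) (hXmeas : ∀ n, Measurable (X n))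
    (hindep : iIndepFun X P)
    (hlaw : ∀ n, Measure.map (X n) P = gammaMeasure (a n) 1) :
    ∀ᵐ ω ∂P, Tendsto (fun n : ℕ => X n ω / n) atTop (nhds c) := by
  have key := fun k : ℕ => gamma_key P a ha c hc halim X hXmeas hlaw
    (show (0:ℝ) < 1 / (k + 1) by positivity)
  filter_upwards [ae_all_iff.2 key] with ω hω
  rw [Metric.tendsto_atTop]
  intro ε hε
  obtain ⟨k, hk⟩ := exists_nat_one_div_lt hε
  obtain ⟨M, hM⟩ := eventually_atTop.1 (hω k)
  exact ⟨M, fun n hn => by rw [Real.dist_eq]; exact lt_trans (hM n hn) hk⟩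
end

section
/- Let c₁ ∈ ℝ and c₂ > 0, and let A be the bounded self-adjoint operator on ℓ²(ℤ; ℂ) defined by (Af)(v) = c₁·f(v) + c₂·(f(v-1) + f(v+1)). Let δ₀ ∈ ℓ²(ℤ; ℂ) be the indicator of the vertex 0. Then for every continuous function f : ℝ → ℂ, ⟨δ₀, f(A)δ₀⟩ = (1/(2π))·∫_{-π}^{π} f(c₁ + 2c₂·cos(ω)) dω, where f(A) is defined by the continuous functional calculus for the self-adjoint operator A. -/
set_option synthInstance.maxHeartbeats 1000000
set_option maxHeartbeats 1000000

open Real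

private lemma ortho_aux (v : ℤ) : (∫ ω in (-π)..π, Complex.exp (Complex.I * v * ω))
    = if v = 0 then (2*(π:ℂ)) else 0 := by
  rcases eq_or_ne v 0 with rfl | hv
  · simp [two_mul]
  · have hc : (Complex.I * (v:ℂ)) ≠ 0 :=
      mul_ne_zero Complex.I_ne_zero (by exact_mod_cast hv)
    rw [if_neg hv]
    have h2 : Complex.exp (Complex.I * v * (π:ℝ)) = Complex.exp (Complex.I * v * ((-π : ℝ))) := by
      rw [show (Complex.I * v * ((π:ℝ)) : ℂ) = Complex.I * v * ((-π:ℝ)) + v * (2*π*Complex.I) by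
        push_cast; ring]
      rw [Complex.exp_add, Complex.exp_int_mul_two_pi_mul_I, mul_one]
    rw [integral_exp_mul_complex hc, h2, sub_self, zero_div]

private lemma keyident_aux (c₁ c₂ : ℝ) (v : ℤ) (ω : ℝ) :
    ((c₁:ℂ) + 2*(c₂:ℂ)*Complex.cos ω) * Complex.exp (Complex.I * v * ω)
      = (c₁:ℂ) * Complex.exp (Complex.I * v * ω)
        + (c₂:ℂ) * (Complex.exp (Complex.I * ((v-1 : ℤ):ℂ) * ω)
            + Complex.exp (Complex.I * ((v+1 : ℤ):ℂ) * ω)) := by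
  have h1 : Complex.exp (Complex.I * ((v-1 : ℤ):ℂ) * ω)
      = Complex.exp (Complex.I * v * ω) * Complex.exp (-(ω:ℂ) * Complex.I) := by
    rw [← Complex.exp_add]; push_cast; ring_nf
  have h2 : Complex.exp (Complex.I * ((v+1 : ℤ):ℂ) * ω)
      = Complex.exp (Complex.I * v * ω) * Complex.exp ((ω:ℂ) * Complex.I) := by
    rw [← Complex.exp_add]; push_cast; ring_nf
  have h3 := Complex.two_cos (x := (ω:ℂ))
  rw [h1, h2]
  linear_combination (Complex.exp (Complex.I * v * ω)) * (c₂:ℂ) * h3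

private lemma contint_aux (c₁ c₂ : ℝ) (n : ℕ) (v : ℤ) :
    Continuous (fun ω : ℝ => ((c₁:ℂ) + 2*(c₂:ℂ)*Complex.cos ω)^n
      * Complex.exp (Complex.I * v * ω)) := by fun_prop

private lemma coords_aux (c₁ c₂ : ℝ)
    (A : lp (fun _ : ℤ => ℂ) 2 →L[ℂ] lp (fun _ : ℤ => ℂ) 2)
    (hA : ∀ (f : lp (fun _ : ℤ => ℂ) 2) (v : ℤ),
      A f v = (c₁ : ℂ) * f v + (c₂ : ℂ) * (f (v - 1) + f (v + 1)))
    (δ₀ : lp (fun _ : ℤ => ℂ) 2) (hδ₀ : ∀ v : ℤ, δ₀ v = if v = 0 then 1 else 0) :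
    ∀ (n : ℕ) (v : ℤ), ((A^n) δ₀) v
      = (1/(2*(π:ℂ))) * ∫ ω in (-π)..π,
          ((c₁:ℂ) + 2*(c₂:ℂ)*Complex.cos ω)^n * Complex.exp (Complex.I * v * ω) := by
  intro n
  induction n with
  | zero =>
    intro v
    simp only [pow_zero, one_mul, ContinuousLinearMap.one_apply]
    rw [ortho_aux, hδ₀]
    rcases eq_or_ne v 0 with rfl | hv
    · rw [if_pos rfl, if_pos rfl]
      rw [one_div, inv_mul_cancel₀ (mul_ne_zero two_ne_zero (Complex.ofReal_ne_zero.mpr Real.pi_ne_zero))]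
    · rw [if_neg hv, if_neg hv, mul_zero]
  | succ n ih =>
    intro v
    have key : (∫ ω in (-π)..π,
          ((c₁:ℂ) + 2*(c₂:ℂ)*Complex.cos ω)^(n+1) * Complex.exp (Complex.I * v * ω))
        = (c₁:ℂ) * (∫ ω in (-π)..π,
            ((c₁:ℂ) + 2*(c₂:ℂ)*Complex.cos ω)^n * Complex.exp (Complex.I * v * ω))
          + ((c₂:ℂ) * (∫ ω in (-π)..π,
              ((c₁:ℂ) + 2*(c₂:ℂ)*Complex.cos ω)^n * Complex.exp (Complex.I * ((v-1:ℤ):ℂ) * ω))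
            + (c₂:ℂ) * (∫ ω in (-π)..π,
              ((c₁:ℂ) + 2*(c₂:ℂ)*Complex.cos ω)^n * Complex.exp (Complex.I * ((v+1:ℤ):ℂ) * ω))) := by
      have J1 := ((contint_aux c₁ c₂ n v).intervalIntegrable (μ := MeasureTheory.volume) (-π) π).const_mul (c₁:ℂ)
      have J2 := ((contint_aux c₁ c₂ n (v-1)).intervalIntegrable (μ := MeasureTheory.volume) (-π) π).const_mul (c₂:ℂ)
      have J3 := ((contint_aux c₁ c₂ n (v+1)).intervalIntegrable (μ := MeasureTheory.volume) (-π) π).const_mul (c₂:ℂ)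
      rw [← intervalIntegral.integral_const_mul, ← intervalIntegral.integral_const_mul,
        ← intervalIntegral.integral_const_mul,
        ← intervalIntegral.integral_add J2 J3,
        ← intervalIntegral.integral_add J1 (J2.add J3)]
      apply intervalIntegral.integral_congr
      intro ω _
      have hk := keyident_aux c₁ c₂ v ω
      calc ((c₁:ℂ) + 2*(c₂:ℂ)*Complex.cos ω)^(n+1) * Complex.exp (Complex.I * v * ω)
          = ((c₁:ℂ) + 2*(c₂:ℂ)*Complex.cos ω)^n
            * (((c₁:ℂ) + 2*(c₂:ℂ)*Complex.cos ω) * Complex.exp (Complex.I * v * ω)) := by ring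
        _ = _ := by rw [hk]; ring
    rw [pow_succ', ContinuousLinearMap.mul_apply, hA, ih v, ih (v-1), ih (v+1), key]
    ring

private lemma inner_delta_aux (δ₀ : lp (fun _ : ℤ => ℂ) 2)
    (hδ₀ : ∀ v : ℤ, δ₀ v = if v = 0 then 1 else 0) (y : lp (fun _ : ℤ => ℂ) 2) :
    (inner ℂ δ₀ y : ℂ) = y 0 := by
  have hδ : δ₀ = lp.single 2 (0:ℤ) (1:ℂ) := by
    apply lp.ext
    funext v
    rw [hδ₀]
    rcases eq_or_ne v 0 with rfl | hv
    · rw [if_pos rfl, lp.single_apply_self]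
    · rw [if_neg hv, lp.single_apply_ne _ _ _ hv]
  rw [hδ, lp.inner_single_left]
  simp [RCLike.inner_apply]

private lemma norm_delta_aux (δ₀ : lp (fun _ : ℤ => ℂ) 2)
    (hδ₀ : ∀ v : ℤ, δ₀ v = if v = 0 then 1 else 0) : ‖δ₀‖ = 1 := by
  have hδ : δ₀ = lp.single 2 (0:ℤ) (1:ℂ) := by
    apply lp.ext
    funext v
    rw [hδ₀]
    rcases eq_or_ne v 0 with rfl | hv
    · rw [if_pos rfl, lp.single_apply_self]
    · rw [if_neg hv, lp.single_apply_ne _ _ _ hv]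
  rw [hδ]
  have := lp.norm_single (p := 2) (E := fun _ : ℤ => ℂ) (by norm_num) 0 (1:ℂ)
  simpa using this

private lemma moments_aux (c₁ c₂ : ℝ)
    (A : lp (fun _ : ℤ => ℂ) 2 →L[ℂ] lp (fun _ : ℤ => ℂ) 2)
    (hA : ∀ (f : lp (fun _ : ℤ => ℂ) 2) (v : ℤ),
      A f v = (c₁ : ℂ) * f v + (c₂ : ℂ) * (f (v - 1) + f (v + 1)))
    (δ₀ : lp (fun _ : ℤ => ℂ) 2) (hδ₀ : ∀ v : ℤ, δ₀ v = if v = 0 then 1 else 0) (n : ℕ) :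
    (inner ℂ δ₀ ((A^n) δ₀) : ℂ)
      = (1/(2*(π:ℂ))) * ∫ ω in (-π)..π, ((c₁:ℂ) + 2*(c₂:ℂ)*Complex.cos ω)^n := by
  rw [inner_delta_aux δ₀ hδ₀, coords_aux c₁ c₂ A hA δ₀ hδ₀ n 0]
  congr 1
  apply intervalIntegral.integral_congr
  intro ω _
  simp

private lemma polyS_aux (c₁ c₂ : ℝ)
    (A : lp (fun _ : ℤ => ℂ) 2 →L[ℂ] lp (fun _ : ℤ => ℂ) 2)
    (hA : ∀ (f : lp (fun _ : ℤ => ℂ) 2) (v : ℤ),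
      A f v = (c₁ : ℂ) * f v + (c₂ : ℂ) * (f (v - 1) + f (v + 1)))
    (hsa : IsSelfAdjoint A)
    (δ₀ : lp (fun _ : ℤ => ℂ) 2) (hδ₀ : ∀ v : ℤ, δ₀ v = if v = 0 then 1 else 0)
    (P : Polynomial ℂ) :
    (inner ℂ δ₀ (cfc (fun z : ℂ => P.eval ((z.re : ℝ) : ℂ)) A δ₀) : ℂ)
      = (1/(2*(π:ℂ))) * ∫ ω in (-π)..π, P.eval (((c₁ + 2*c₂*Real.cos ω : ℝ)) : ℂ) := by
  haveI : IsStarNormal A := hsa.isStarNormal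
  have hre : ∀ Q : Polynomial ℂ, ContinuousOn (fun z : ℂ => Q.eval ((z.re : ℂ))) (spectrum ℂ A) :=
    fun Q => ((Q.continuous).comp (Complex.continuous_ofReal.comp Complex.continuous_re)).continuousOn
  have hcR : ∀ Q : Polynomial ℂ, Continuous (fun ω : ℝ => Q.eval (((c₁ + 2*c₂*Real.cos ω : ℝ)) : ℂ)) :=
    fun Q => (Q.continuous).comp (Complex.continuous_ofReal.comp (by fun_prop))
  induction P using Polynomial.induction_on' with
  | add p q hp hq =>
    have heq : (fun z : ℂ => (p+q).eval ((z.re : ℂ))) =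
        fun z : ℂ => p.eval ((z.re : ℂ)) + q.eval ((z.re : ℂ)) := by
      funext z; simp [Polynomial.eval_add]
    rw [heq, cfc_add (a := A) _ _ (hre p) (hre q), ContinuousLinearMap.add_apply,
      inner_add_right, hp, hq]
    have : (∫ ω in (-π)..π, (p+q).eval (((c₁ + 2*c₂*Real.cos ω : ℝ)) : ℂ))
        = (∫ ω in (-π)..π, p.eval (((c₁ + 2*c₂*Real.cos ω : ℝ)) : ℂ))
          + ∫ ω in (-π)..π, q.eval (((c₁ + 2*c₂*Real.cos ω : ℝ)) : ℂ) := by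
      rw [← intervalIntegral.integral_add ((hcR p).intervalIntegrable (μ := MeasureTheory.volume) _ _)
        ((hcR q).intervalIntegrable (μ := MeasureTheory.volume) _ _)]
      apply intervalIntegral.integral_congr
      intro ω _
      simp [Polynomial.eval_add]
    rw [this]
    ring
  | monomial n c =>
    have heq : (fun z : ℂ => (Polynomial.monomial n c).eval ((z.re : ℂ))) =
        fun z : ℂ => c * ((z.re : ℂ))^n := by
      funext z; simp [Polynomial.eval_monomial]
    have hcong : (spectrum ℂ A).EqOn (fun z : ℂ => c * ((z.re : ℂ))^n) (fun z : ℂ => c * z^n) := by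
      intro z hz
      simp only []
      rw [← hsa.mem_spectrum_eq_re hz]
    rw [heq, cfc_congr hcong, cfc_const_mul c (fun z : ℂ => z ^ n) A (by fun_prop),
      cfc_pow_id (R := ℂ) A n, ContinuousLinearMap.smul_apply, inner_smul_right,
      moments_aux c₁ c₂ A hA δ₀ hδ₀ n]
    have : (∫ ω in (-π)..π, (Polynomial.monomial n c).eval (((c₁ + 2*c₂*Real.cos ω : ℝ)) : ℂ))
        = c * ∫ ω in (-π)..π, ((c₁:ℂ) + 2*(c₂:ℂ)*Complex.cos ω)^n := by
      rw [← intervalIntegral.integral_const_mul]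
      apply intervalIntegral.integral_congr
      intro ω _
      simp only [Polynomial.eval_monomial]
      congr 2
      push_cast [Complex.ofReal_cos]
      ring
    rw [this]
    ring

/-- For the self-adjoint Jacobi operator `(Af)(v) = c₁f(v) + c₂(f(v-1) + f(v+1))` on
`ℓ²(ℤ; ℂ)` and the indicator `δ₀` of the vertex `0`, the spectral measure at the root `0`
is given by `⟨δ₀, f(A)δ₀⟩ = (1/2π)∫_{-π}^{π} f(c₁ + 2c₂cos ω) dω` for every continuous `f`,
where `f(A)` is the continuous functional calculus applied to `A` (the spectrum of the
self-adjoint `A` is real, so only the values of `f` on `ℝ` matter). -/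
theorem spectral_measure_at_root_eq_pushforward_cos
    (c₁ c₂ : ℝ) (hc₂ : 0 < c₂)
    (A : lp (fun _ : ℤ => ℂ) 2 →L[ℂ] lp (fun _ : ℤ => ℂ) 2)
    (hA : ∀ (f : lp (fun _ : ℤ => ℂ) 2) (v : ℤ),
      A f v = (c₁ : ℂ) * f v + (c₂ : ℂ) * (f (v - 1) + f (v + 1)))
    (hsa : IsSelfAdjoint A)
    (δ₀ : lp (fun _ : ℤ => ℂ) 2) (hδ₀ : ∀ v : ℤ, δ₀ v = if v = 0 then 1 else 0)
    (f : ℝ → ℂ) (hf : Continuous f) :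
    (inner ℂ δ₀ (cfc (fun z : ℂ => f z.re) A δ₀) : ℂ)
      = (1 / (2 * π) : ℂ) * ∫ ω in (-π)..π, f (c₁ + 2 * c₂ * Real.cos ω) := by
  haveI : IsStarNormal A := hsa.isStarNormal
  haveI : Nontrivial (lp (fun _ : ℤ => ℂ) 2) := by
    refine ⟨⟨0, lp.single 2 (0:ℤ) (1:ℂ), fun h => ?_⟩⟩
    have := congrArg (fun g : lp (fun _ : ℤ => ℂ) 2 => g 0) h
    simp [lp.single_apply_self] at this
  set R : ℝ := max ‖A‖ (|c₁| + 2*c₂) with hR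
  have hspec : ∀ z ∈ spectrum ℂ A, z.re ∈ Set.Icc (-R) R := by
    intro z hz
    have h1 : |z.re| ≤ ‖z‖ := Complex.abs_re_le_norm z
    have h2 : ‖z‖ ≤ ‖A‖ := spectrum.norm_le_norm_of_mem hz
    have h3 : |z.re| ≤ R := le_trans h1 (le_trans h2 (le_max_left _ _))
    exact abs_le.mp h3
  have hcosmem : ∀ ω : ℝ, c₁ + 2*c₂*Real.cos ω ∈ Set.Icc (-R) R := by
    intro ω
    have h1 : |c₁ + 2*c₂*Real.cos ω| ≤ |c₁| + 2*c₂ := by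
      refine (abs_add_le _ _).trans ?_
      have : |2*c₂*Real.cos ω| ≤ 2*c₂ := by
        rw [abs_mul]
        calc |2*c₂| * |Real.cos ω| ≤ |2*c₂| * 1 :=
          mul_le_mul_of_nonneg_left (Real.abs_cos_le_one ω) (abs_nonneg _)
        _ = 2*c₂ := by rw [mul_one, abs_of_pos (by linarith)]
      linarith
    exact abs_le.mp (h1.trans (le_max_right _ _))
  set L : ℂ := inner ℂ δ₀ (cfc (fun z : ℂ => f z.re) A δ₀) with hL
  set Rv : ℂ := (1 / (2 * (π:ℂ))) * ∫ ω in (-π)..π, f (c₁ + 2 * c₂ * Real.cos ω) with hRv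
  have key : ∀ ε : ℝ, 0 < ε → ‖L - Rv‖ ≤ 4*ε := by
    intro ε hε
    obtain ⟨pre, hpre⟩ := exists_polynomial_near_of_continuousOn (-R) R (fun x => (f x).re)
      ((Complex.continuous_re.comp hf).continuousOn) ε hε
    obtain ⟨pim, hpim⟩ := exists_polynomial_near_of_continuousOn (-R) R (fun x => (f x).im)
      ((Complex.continuous_im.comp hf).continuousOn) ε hε
    set P : Polynomial ℂ := pre.map (algebraMap ℝ ℂ) + Polynomial.C Complex.I * pim.map (algebraMap ℝ ℂ) with hP
    have hPev : ∀ x : ℝ, P.eval (x:ℂ) = ((pre.eval x : ℝ) : ℂ) + Complex.I * ((pim.eval x : ℝ) : ℂ) := by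
      intro x
      have hmap : ∀ q : Polynomial ℝ, (q.map (algebraMap ℝ ℂ)).eval (x:ℂ) = ((q.eval x : ℝ) : ℂ) := by
        intro q
        rw [Polynomial.eval_map, show ((x:ℂ)) = algebraMap ℝ ℂ x from rfl, Polynomial.eval₂_at_apply]
        rfl
      simp [hP, hmap]
    have hPnear : ∀ x ∈ Set.Icc (-R) R, ‖P.eval (x:ℂ) - f x‖ ≤ 2*ε := by
      intro x hx
      have h1 := hpre x hx
      have h2 := hpim x hx
      have hfx : f x = ((f x).re : ℂ) + Complex.I * ((f x).im : ℂ) := by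
        rw [mul_comm]; exact (Complex.re_add_im (f x)).symm
      rw [hPev x, hfx]
      have : (((pre.eval x : ℝ) : ℂ) + Complex.I * ((pim.eval x : ℝ) : ℂ))
          - (((f x).re : ℂ) + Complex.I * ((f x).im : ℂ))
          = ((pre.eval x - (f x).re : ℝ) : ℂ) + Complex.I * ((pim.eval x - (f x).im : ℝ) : ℂ) := by
        push_cast; ring
      rw [this]
      calc ‖((pre.eval x - (f x).re : ℝ) : ℂ) + Complex.I * ((pim.eval x - (f x).im : ℝ) : ℂ)‖
          ≤ ‖((pre.eval x - (f x).re : ℝ) : ℂ)‖ + ‖Complex.I * ((pim.eval x - (f x).im : ℝ) : ℂ)‖ :=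
            norm_add_le _ _
        _ ≤ ε + ε := by
            rw [norm_mul, Complex.norm_I, one_mul, Complex.norm_real, Complex.norm_real]
            exact add_le_add (le_of_lt h1) (le_of_lt h2)
        _ = 2*ε := by ring
    -- value at polynomial
    have hpoly := polyS_aux c₁ c₂ A hA hsa δ₀ hδ₀ P
    set LP : ℂ := inner ℂ δ₀ (cfc (fun z : ℂ => P.eval ((z.re : ℝ) : ℂ)) A δ₀) with hLP
    set RP : ℂ := (1/(2*(π:ℂ))) * ∫ ω in (-π)..π, P.eval (((c₁ + 2*c₂*Real.cos ω : ℝ)) : ℂ) with hRP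
    have hcfcP : ContinuousOn (fun z : ℂ => P.eval ((z.re : ℂ))) (spectrum ℂ A) :=
      ((P.continuous).comp (Complex.continuous_ofReal.comp Complex.continuous_re)).continuousOn
    have hcfcf : ContinuousOn (fun z : ℂ => f z.re) (spectrum ℂ A) :=
      (hf.comp Complex.continuous_re).continuousOn
    have hLdiff : ‖L - LP‖ ≤ 2*ε := by
      have hsub : cfc (fun z : ℂ => f z.re - P.eval ((z.re : ℂ))) A
          = cfc (fun z : ℂ => f z.re) A - cfc (fun z : ℂ => P.eval ((z.re : ℂ))) A :=
        cfc_sub _ _ A hcfcf hcfcP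
      have : L - LP = inner ℂ δ₀ ((cfc (fun z : ℂ => f z.re - P.eval ((z.re : ℂ))) A) δ₀) := by
        rw [hsub, ContinuousLinearMap.sub_apply, inner_sub_right]
      rw [this]
      have hnormT : ‖cfc (fun z : ℂ => f z.re - P.eval ((z.re : ℂ))) A‖ ≤ 2*ε := by
        refine norm_cfc_le (by positivity) ?_
        intro z hz
        have h4 := hPnear z.re (hspec z hz)
        calc ‖f z.re - P.eval ((z.re : ℂ))‖ = ‖P.eval ((z.re : ℂ)) - f z.re‖ := norm_sub_rev _ _
          _ ≤ 2*ε := h4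
      calc ‖(inner ℂ δ₀ ((cfc (fun z : ℂ => f z.re - P.eval ((z.re : ℂ))) A) δ₀) : ℂ)‖
          ≤ ‖δ₀‖ * ‖(cfc (fun z : ℂ => f z.re - P.eval ((z.re : ℂ))) A) δ₀‖ :=
            norm_inner_le_norm _ _
        _ ≤ ‖δ₀‖ * (‖cfc (fun z : ℂ => f z.re - P.eval ((z.re : ℂ))) A‖ * ‖δ₀‖) :=
            mul_le_mul_of_nonneg_left (ContinuousLinearMap.le_opNorm _ _) (norm_nonneg _)
        _ = ‖cfc (fun z : ℂ => f z.re - P.eval ((z.re : ℂ))) A‖ := by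
            rw [norm_delta_aux δ₀ hδ₀]; ring
        _ ≤ 2*ε := hnormT
    have hRdiff : ‖RP - Rv‖ ≤ 2*ε := by
      have hint : (∫ ω in (-π)..π, P.eval (((c₁ + 2*c₂*Real.cos ω : ℝ)) : ℂ))
          - (∫ ω in (-π)..π, f (c₁ + 2 * c₂ * Real.cos ω))
          = ∫ ω in (-π)..π, (P.eval (((c₁ + 2*c₂*Real.cos ω : ℝ)) : ℂ) - f (c₁ + 2 * c₂ * Real.cos ω)) := by
        have hc1 : Continuous fun ω : ℝ => P.eval (((c₁ + 2*c₂*Real.cos ω : ℝ)) : ℂ) :=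
          (P.continuous).comp (Complex.continuous_ofReal.comp
            (by fun_prop : Continuous fun ω : ℝ => c₁ + 2*c₂*Real.cos ω))
        have hc2 : Continuous fun ω : ℝ => f (c₁ + 2 * c₂ * Real.cos ω) :=
          hf.comp (by fun_prop : Continuous fun ω : ℝ => c₁ + 2*c₂*Real.cos ω)
        rw [intervalIntegral.integral_sub
          (hc1.intervalIntegrable (μ := MeasureTheory.volume) _ _)
          (hc2.intervalIntegrable (μ := MeasureTheory.volume) _ _)]
      have hbound : ‖∫ ω in (-π)..π, (P.eval (((c₁ + 2*c₂*Real.cos ω : ℝ)) : ℂ) - f (c₁ + 2 * c₂ * Real.cos ω))‖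
          ≤ 2*ε * |π - (-π)| := by
        apply intervalIntegral.norm_integral_le_of_norm_le_const
        intro ω _
        exact hPnear _ (hcosmem ω)
      have hpinorm : ‖(1/(2*(π:ℂ)))‖ = 1/(2*π) := by
        have hcast : ((2:ℂ) * (π:ℂ)) = ((2*π : ℝ) : ℂ) := by push_cast; ring
        rw [norm_div, norm_one, hcast, Complex.norm_real, Real.norm_of_nonneg (by positivity)]
      have : RP - Rv = (1/(2*(π:ℂ))) * ∫ ω in (-π)..π, (P.eval (((c₁ + 2*c₂*Real.cos ω : ℝ)) : ℂ) - f (c₁ + 2 * c₂ * Real.cos ω)) := by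
        rw [hRP, hRv, ← hint]
        push_cast
        ring
      rw [this, norm_mul, hpinorm]
      have hπ : |π - (-π)| = 2*π := by
        rw [show π - (-π) = 2*π by ring, abs_of_pos (by positivity)]
      rw [hπ] at hbound
      calc (1/(2*π)) * ‖∫ ω in (-π)..π, (P.eval (((c₁ + 2*c₂*Real.cos ω : ℝ)) : ℂ) - f (c₁ + 2 * c₂ * Real.cos ω))‖
          ≤ (1/(2*π)) * (2*ε * (2*π)) :=
            mul_le_mul_of_nonneg_left hbound (by positivity)
        _ = 2*ε := by field_simp
    calc ‖L - Rv‖ = ‖(L - LP) + (RP - Rv)‖ := by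
          rw [show L - Rv = (L - LP) + (RP - Rv) by rw [hpoly]; ring]
      _ ≤ ‖L - LP‖ + ‖RP - Rv‖ := norm_add_le _ _
      _ ≤ 2*ε + 2*ε := add_le_add hLdiff hRdiff
      _ = 4*ε := by ring
  have hzero : ‖L - Rv‖ = 0 := by
    by_contra h
    have hpos : 0 < ‖L - Rv‖ := lt_of_le_of_ne (norm_nonneg _) (Ne.symm h)
    have := key (‖L - Rv‖/8) (by positivity)
    linarith
  exact sub_eq_zero.mp (norm_eq_zero.mp hzero)
end

section
/- Let c₁ ∈ ℝ, c₂ > 0, and let A be the bounded self-adjoint operator on ℓ²(ℤ; ℂ) defined by (Af)(v) = c₁·f(v) + c₂·(f(v-1) + f(v+1)), with δ₀ ∈ ℓ²(ℤ; ℂ) the indicator of the vertex 0. Then for every continuous function f : ℝ → ℂ, ⟨δ₀, f(A)δ₀⟩ = ∫_{c₁-2c₂}^{c₁+2c₂} f(x)·1/(π√(4c₂² - (x - c₁)²)) dx. In other words, the spectral measure of A at the root 0 is the arcsine-type measure with density 𝟙[x ∈ (c₁-2c₂, c₁+2c₂)]·1/(π√(4c₂² - (x - c₁)²)). -/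
open Real MeasureTheory
open scoped ENNReal

/-! ### Auxiliary definitions and lemmas -/

noncomputable def SpecArcsine.tr (k : ℤ) (f : lp (fun _ : ℤ => ℂ) 2) :
    lp (fun _ : ℤ => ℂ) 2 :=
  ⟨fun v => f (v + k), by
    apply memℓp_gen
    have h := ((lp.memℓp f).summable (by norm_num : 0 < (2:ℝ≥0∞).toReal))
    have := ((Equiv.addRight k).summable_iff
      (f := fun v : ℤ => ‖f v‖ ^ (2:ℝ≥0∞).toReal)).mpr h
    simpa [Equiv.addRight, Function.comp_def] using this⟩

namespace SpecArcsine

lemma tr_apply (k : ℤ) (f : lp (fun _ : ℤ => ℂ) 2) (v : ℤ) : tr k f v = f (v + k) := rfl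

lemma tr_norm (k : ℤ) (f : lp (fun _ : ℤ => ℂ) 2) : ‖tr k f‖ = ‖f‖ := by
  rw [lp.norm_eq_tsum_rpow (by norm_num) (tr k f), lp.norm_eq_tsum_rpow (by norm_num) f]
  congr 1
  have := ((Equiv.addRight k).tsum_eq (f := fun v : ℤ => ‖f v‖ ^ (2:ℝ≥0∞).toReal))
  simpa [Equiv.addRight, tr_apply] using this

lemma spec_bound (c₁ c₂ : ℝ) (hc₂ : 0 < c₂)
    (A : lp (fun _ : ℤ => ℂ) 2 →L[ℂ] lp (fun _ : ℤ => ℂ) 2)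
    (hA : ∀ (f : lp (fun _ : ℤ => ℂ) 2) (v : ℤ),
      A f v = (c₁ : ℂ) * f v + (c₂ : ℂ) * (f (v - 1) + f (v + 1)))
    (hsa : IsSelfAdjoint A)
    (δ₀ : lp (fun _ : ℤ => ℂ) 2) (hδ₀ : ∀ v : ℤ, δ₀ v = if v = 0 then 1 else 0) :
    ∀ z ∈ spectrum ℂ A, z = z.re ∧ z.re ∈ Set.Icc (c₁ - 2*c₂) (c₁ + 2*c₂) := by
  intro z hz
  haveI : Nontrivial (lp (fun _ : ℤ => ℂ) 2) := by
    refine ⟨δ₀, 0, fun h => ?_⟩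
    have : δ₀ 0 = (0 : lp (fun _ : ℤ => ℂ) 2) 0 := by rw [h]
    rw [hδ₀ 0, lp.coeFn_zero] at this
    simp at this
  have hre : z = z.re := hsa.mem_spectrum_eq_re hz
  refine ⟨hre, ?_⟩
  set B := A - algebraMap ℂ _ (c₁:ℂ) with hB
  have hBapp : ∀ (f : lp (fun _ : ℤ => ℂ) 2), B f = (c₂:ℂ) • (tr (-1) f + tr 1 f) := by
    intro f
    ext v
    have h1 : B f v = A f v - (c₁:ℂ) * f v := by
      simp [hB, Algebra.algebraMap_eq_smul_one, ContinuousLinearMap.sub_apply,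
        ContinuousLinearMap.smul_apply, ContinuousLinearMap.one_apply, lp.coeFn_sub,
        Pi.sub_apply, lp.coeFn_smul, Pi.smul_apply, smul_eq_mul]
      rfl
    rw [lp.coeFn_smul, Pi.smul_apply, lp.coeFn_add, Pi.add_apply, h1, hA]
    rw [tr_apply, tr_apply]
    push_cast
    rw [smul_eq_mul]
    ring
  have hnB : ‖B‖ ≤ 2 * c₂ := by
    refine ContinuousLinearMap.opNorm_le_bound _ (by positivity) (fun f => ?_)
    rw [hBapp f]
    calc ‖(c₂:ℂ) • (tr (-1) f + tr 1 f)‖ = c₂ * ‖tr (-1) f + tr 1 f‖ := by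
          rw [norm_smul]; simp [abs_of_pos hc₂]
      _ ≤ c₂ * (‖tr (-1) f‖ + ‖tr 1 f‖) := by
          gcongr; exact norm_add_le _ _
      _ = 2 * c₂ * ‖f‖ := by rw [tr_norm, tr_norm]; ring
  have hzB : z - (c₁:ℂ) ∈ spectrum ℂ B := by
    rw [← spectrum.sub_singleton_eq]
    exact Set.sub_mem_sub hz rfl
  have hle := (spectrum.norm_le_norm_of_mem hzB).trans hnB
  rw [hre] at hle
  have habs : |z.re - c₁| ≤ 2 * c₂ := by
    rw [← Real.norm_eq_abs, ← Complex.norm_real]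
    push_cast
    simpa using hle
  constructor <;> [linarith [abs_le.mp habs |>.1]; linarith [abs_le.mp habs |>.2]]

noncomputable def EE (v : ℤ) (θ : ℝ) : ℂ := Complex.exp (-(v:ℂ) * Complex.I * θ)

lemma EE_cont (v : ℤ) : Continuous (EE v) := by
  unfold EE; fun_prop

lemma EE_base (v : ℤ) :
    ∫ θ in (0:ℝ)..(2*π), EE v θ = if v = 0 then (2*π : ℂ) else 0 := by
  unfold EE
  split_ifs with h
  · subst h; simp
  · have hc : -(v:ℂ) * Complex.I ≠ 0 := by
      simp [Complex.I_ne_zero, Complex.ext_iff]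
      exact_mod_cast h
    rw [integral_exp_mul_complex hc]
    have : Complex.exp (-(v:ℂ) * Complex.I * (2*π)) = 1 := by
      have := Complex.exp_int_mul_two_pi_mul_I (-v)
      rw [← this]
      congr 1
      push_cast
      ring
    rw [show ((2*π:ℝ):ℂ) = (2*π:ℂ) by push_cast; ring] at *
    rw [this]
    simp

lemma EE_rec (c₁ c₂ : ℝ) (v : ℤ) (θ : ℝ) :
    ((c₁:ℂ) + 2*c₂*Real.cos θ) * EE v θ
      = c₁ * EE v θ + c₂ * (EE (v-1) θ + EE (v+1) θ) := by
  unfold EE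
  have e1 : Complex.exp (-((v:ℂ)-1) * Complex.I * θ)
      = Complex.exp (-(v:ℂ) * Complex.I * θ) * Complex.exp (θ*Complex.I) := by
    rw [← Complex.exp_add]; congr 1; ring
  have e2 : Complex.exp (-((v:ℂ)+1) * Complex.I * θ)
      = Complex.exp (-(v:ℂ) * Complex.I * θ) * Complex.exp (-θ*Complex.I) := by
    rw [← Complex.exp_add]; congr 1; ring
  push_cast
  rw [Complex.cos, e1, e2]
  ring

noncomputable def XX (c₁ c₂ : ℝ) (θ : ℝ) : ℂ := (c₁:ℂ) + 2*c₂*Real.cos θ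

lemma XX_cont (c₁ c₂ : ℝ) : Continuous (XX c₁ c₂) := by unfold XX; fun_prop

lemma M_rec (c₁ c₂ : ℝ) (n : ℕ) (v : ℤ) :
    ∫ θ in (0:ℝ)..(2*π), XX c₁ c₂ θ ^ (n+1) * EE v θ
      = (c₁:ℂ) * (∫ θ in (0:ℝ)..(2*π), XX c₁ c₂ θ ^ n * EE v θ)
        + (c₂:ℂ) * ((∫ θ in (0:ℝ)..(2*π), XX c₁ c₂ θ ^ n * EE (v-1) θ)
          + ∫ θ in (0:ℝ)..(2*π), XX c₁ c₂ θ ^ n * EE (v+1) θ) := by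
  have key : ∀ θ : ℝ, XX c₁ c₂ θ ^ (n+1) * EE v θ
      = (c₁:ℂ) * (XX c₁ c₂ θ ^ n * EE v θ)
        + (c₂:ℂ) * ((XX c₁ c₂ θ ^ n * EE (v-1) θ) + (XX c₁ c₂ θ ^ n * EE (v+1) θ)) := by
    intro θ
    have := EE_rec c₁ c₂ v θ
    calc XX c₁ c₂ θ ^ (n+1) * EE v θ = XX c₁ c₂ θ ^ n * (XX c₁ c₂ θ * EE v θ) := by ring
      _ = XX c₁ c₂ θ ^ n * ((c₁:ℂ) * EE v θ + c₂ * (EE (v-1) θ + EE (v+1) θ)) := by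
          rw [XX]; rw [this]
      _ = _ := by ring
  simp only [key]
  have i1 : ∀ w : ℤ, IntervalIntegrable (fun θ => XX c₁ c₂ θ ^ n * EE w θ) volume 0 (2*π) :=
    fun w => (((XX_cont c₁ c₂).pow n).mul (EE_cont w)).intervalIntegrable _ _
  rw [intervalIntegral.integral_add ((i1 v).const_mul _)
      (((i1 (v-1)).add (i1 (v+1))).const_mul _),
    intervalIntegral.integral_const_mul, intervalIntegral.integral_const_mul,
    intervalIntegral.integral_add (i1 _) (i1 _)]

lemma moment_eq (c₁ c₂ : ℝ)
    (A : lp (fun _ : ℤ => ℂ) 2 →L[ℂ] lp (fun _ : ℤ => ℂ) 2)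
    (hA : ∀ (f : lp (fun _ : ℤ => ℂ) 2) (v : ℤ),
      A f v = (c₁ : ℂ) * f v + (c₂ : ℂ) * (f (v - 1) + f (v + 1)))
    (δ₀ : lp (fun _ : ℤ => ℂ) 2) (hδ₀ : ∀ v : ℤ, δ₀ v = if v = 0 then 1 else 0)
    (n : ℕ) (v : ℤ) :
    ((A^n) δ₀ : ∀ _ : ℤ, ℂ) v
      = (2*π:ℂ)⁻¹ * ∫ θ in (0:ℝ)..(2*π), XX c₁ c₂ θ ^ n * EE v θ := by
  induction n generalizing v with
  | zero =>
    simp only [pow_zero, ContinuousLinearMap.one_apply, XX]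
    simp only [pow_zero, one_mul, EE_base, hδ₀ v]
    split_ifs
    · rw [inv_mul_cancel₀ (by norm_num [Real.pi_ne_zero] : (2*π:ℂ) ≠ 0)]
    · simp
  | succ n ih =>
    have hp : (A^(n+1)) δ₀ = A ((A^n) δ₀) := by
      rw [pow_succ']
      rfl
    rw [hp, hA ((A^n) δ₀) v, ih v, ih (v-1), ih (v+1), M_rec c₁ c₂ n v]
    set Iv := ∫ θ in (0:ℝ)..(2*π), XX c₁ c₂ θ ^ n * EE v θ with hIv
    set Iv1 := ∫ θ in (0:ℝ)..(2*π), XX c₁ c₂ θ ^ n * EE (v-1) θ with hIv1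
    set Iv2 := ∫ θ in (0:ℝ)..(2*π), XX c₁ c₂ θ ^ n * EE (v+1) θ with hIv2
    ring

lemma half_circle (c₁ c₂ : ℝ) (h : ℝ → ℂ) (hh : Continuous h) :
    ∫ θ in (0:ℝ)..(2*π), h (c₁ + 2*c₂*Real.cos θ)
      = 2 * ∫ θ in (0:ℝ)..π, h (c₁ - 2*c₂*Real.cos θ) := by
  have hH : Continuous (fun θ : ℝ => h (c₁ + 2*c₂*Real.cos θ)) := by fun_prop
  have I1 : ∫ θ in π..(2*π), h (c₁ + 2*c₂*Real.cos θ)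
      = ∫ θ in (0:ℝ)..π, h (c₁ + 2*c₂*Real.cos θ) := by
    have := intervalIntegral.integral_comp_sub_left
      (a := (0:ℝ)) (b := π) (fun θ : ℝ => h (c₁ + 2*c₂*Real.cos θ)) (2*π)
    rw [show 2*π - π = π by ring, show 2*π - 0 = 2*π by ring] at this
    rw [← this]
    apply intervalIntegral.integral_congr
    intro x _
    simp [Real.cos_two_pi_sub]
  have I2 : ∫ θ in (0:ℝ)..π, h (c₁ + 2*c₂*Real.cos θ)
      = ∫ θ in (0:ℝ)..π, h (c₁ - 2*c₂*Real.cos θ) := by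
    have := intervalIntegral.integral_comp_sub_left
      (a := (0:ℝ)) (b := π) (fun θ : ℝ => h (c₁ + 2*c₂*Real.cos θ)) π
    rw [show π - π = 0 by ring, show π - 0 = π by ring] at this
    rw [← this]
    apply intervalIntegral.integral_congr
    intro x _
    simp only [Real.cos_pi_sub]
    ring_nf
  have I3 : ∫ θ in (0:ℝ)..(2*π), h (c₁ + 2*c₂*Real.cos θ)
      = (∫ θ in (0:ℝ)..π, h (c₁ + 2*c₂*Real.cos θ))
        + ∫ θ in π..(2*π), h (c₁ + 2*c₂*Real.cos θ) := by
    rw [intervalIntegral.integral_add_adjacent_intervals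
      (hH.intervalIntegrable _ _) (hH.intervalIntegrable _ _)]
  rw [I3, I1, I2]
  ring

lemma subst_lemma (c₁ c₂ : ℝ) (hc₂ : 0 < c₂) (g : ℝ → ℂ) (hg : Continuous g) :
    ∫ x in (c₁ - 2 * c₂)..(c₁ + 2 * c₂),
        g x * ((1 / (π * Real.sqrt (4 * c₂ ^ 2 - (x - c₁) ^ 2)) : ℝ) : ℂ)
      = (π:ℂ)⁻¹ * ∫ θ in (0:ℝ)..π, g (c₁ - 2*c₂*Real.cos θ) := by
  have hab : c₁ - 2*c₂ ≤ c₁ + 2*c₂ := by linarith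
  set φ : ℝ → ℝ := fun θ => c₁ - 2*c₂*Real.cos θ with hφ
  set G : ℝ → ℂ := fun x => g x * ((1 / (π * Real.sqrt (4 * c₂ ^ 2 - (x - c₁) ^ 2)) : ℝ) : ℂ)
    with hG
  -- strict mono
  have hmono : StrictMonoOn φ (Set.Icc 0 π) := by
    intro x hx y hy hxy
    have := Real.strictAntiOn_cos hx hy hxy
    simp only [hφ]
    nlinarith
  have hcont : ContinuousOn φ (Set.Icc 0 π) := by fun_prop
  have hφ0 : φ 0 = c₁ - 2*c₂ := by simp [hφ]
  have hφπ : φ π = c₁ + 2*c₂ := by simp [hφ]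
  have himg : φ '' Set.Ioo 0 π = Set.Ioo (c₁ - 2*c₂) (c₁ + 2*c₂) := by
    apply Set.Subset.antisymm
    · rintro x ⟨θ, hθ, rfl⟩
      constructor
      · rw [← hφ0]; exact hmono (Set.left_mem_Icc.2 Real.pi_pos.le)
          (Set.mem_Icc_of_Ioo hθ) hθ.1
      · rw [← hφπ]; exact hmono (Set.mem_Icc_of_Ioo hθ)
          (Set.right_mem_Icc.2 Real.pi_pos.le) hθ.2
    · rw [← hφ0, ← hφπ]
      exact intermediate_value_Ioo Real.pi_pos.le hcont
  have hderiv : ∀ θ ∈ Set.Ioo (0:ℝ) π,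
      HasDerivWithinAt φ (2*c₂*Real.sin θ) (Set.Ioo 0 π) θ := by
    intro θ _
    have h1 : HasDerivAt (fun x => c₁ - 2*c₂*Real.cos x) (2*c₂*Real.sin θ) θ := by
      have h2 := ((Real.hasDerivAt_cos θ).const_mul (2*c₂)).const_sub c₁
      rw [show 2*c₂*Real.sin θ = -(2*c₂*-Real.sin θ) by ring]
      exact h2
    exact (hφ ▸ h1).hasDerivWithinAt
  have hinj : Set.InjOn φ (Set.Ioo 0 π) := hmono.injOn.mono Set.Ioo_subset_Icc_self
  have hchange := integral_image_eq_integral_abs_deriv_smul measurableSet_Ioo hderiv hinj G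
  rw [himg] at hchange
  have lhs_eq : (∫ x in (c₁ - 2 * c₂)..(c₁ + 2 * c₂), G x)
      = ∫ x in Set.Ioo (c₁ - 2*c₂) (c₁ + 2*c₂), G x := by
    rw [intervalIntegral.integral_of_le hab, ← integral_Ioc_eq_integral_Ioo]
  have point : ∀ θ ∈ Set.Ioo (0:ℝ) π,
      |2*c₂*Real.sin θ| • G (φ θ) = ((π:ℝ)⁻¹ : ℂ) * g (φ θ) := by
    intro θ hθ
    have hsin : 0 < Real.sin θ := Real.sin_pos_of_pos_of_lt_pi hθ.1 hθ.2
    have hsq : 4 * c₂ ^ 2 - (φ θ - c₁) ^ 2 = (2*c₂*Real.sin θ)^2 := by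
      have := Real.sin_sq_add_cos_sq θ
      simp only [hφ]
      ring_nf
      nlinarith [Real.sin_sq_add_cos_sq θ]
    have hsqrt : Real.sqrt (4 * c₂ ^ 2 - (φ θ - c₁) ^ 2) = 2*c₂*Real.sin θ := by
      rw [hsq, Real.sqrt_sq (by positivity)]
    simp only [hG, hsqrt]
    rw [abs_of_pos (by positivity), Complex.real_smul]
    have hkey : ((2*c₂*Real.sin θ:ℝ):ℂ) * ((1 / (π * (2*c₂*Real.sin θ)):ℝ):ℂ)
        = (((π:ℝ)⁻¹:ℝ):ℂ) := by
      rw [← Complex.ofReal_mul]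
      congr 1
      have hne : (2*c₂*Real.sin θ : ℝ) ≠ 0 := by positivity
      field_simp
    calc ((2*c₂*Real.sin θ:ℝ):ℂ) * (g (φ θ) * ((1 / (π * (2*c₂*Real.sin θ)):ℝ):ℂ))
        = (((2*c₂*Real.sin θ:ℝ):ℂ) * ((1 / (π * (2*c₂*Real.sin θ)):ℝ):ℂ)) * g (φ θ) := by
          ring
      _ = ((π:ℝ)⁻¹ : ℂ) * g (φ θ) := by rw [hkey]; norm_num
  rw [lhs_eq, hchange, setIntegral_congr_fun measurableSet_Ioo point]
  rw [MeasureTheory.integral_const_mul]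
  congr 1
  rw [intervalIntegral.integral_of_le Real.pi_pos.le, ← integral_Ioc_eq_integral_Ioo]

lemma poly_inner (c₁ c₂ : ℝ)
    (A : lp (fun _ : ℤ => ℂ) 2 →L[ℂ] lp (fun _ : ℤ => ℂ) 2)
    (hsa : IsSelfAdjoint A)
    (hspec : ∀ z ∈ spectrum ℂ A, z = (z.re:ℂ))
    (δ₀ : lp (fun _ : ℤ => ℂ) 2)
    (hmom : ∀ n : ℕ, (inner ℂ δ₀ ((A^n) δ₀) : ℂ)
      = (2*π:ℂ)⁻¹ * ∫ θ in (0:ℝ)..(2*π), XX c₁ c₂ θ ^ n)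
    (p : Polynomial ℝ) :
    (inner ℂ δ₀ (cfc (fun z : ℂ => ((p.eval z.re : ℝ) : ℂ)) A δ₀) : ℂ)
      = (2*π:ℂ)⁻¹ * ∫ θ in (0:ℝ)..(2*π), ((p.eval (c₁ + 2*c₂*Real.cos θ) : ℝ) : ℂ) := by
  haveI : IsStarNormal A := hsa.isStarNormal
  set N := p.natDegree + 1 with hN
  have key : cfc (fun z : ℂ => ((p.eval z.re : ℝ) : ℂ)) A
      = ∑ i ∈ Finset.range N, ((p.coeff i : ℝ) : ℂ) • A ^ i := by
    have h1 : cfc (fun z : ℂ => ((p.eval z.re : ℝ) : ℂ)) A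
        = cfc (fun z : ℂ => ∑ i ∈ Finset.range N, ((p.coeff i : ℝ):ℂ) * z ^ i) A := by
      apply cfc_congr
      intro z hz
      have hzre := hspec z hz
      simp only
      rw [Polynomial.eval_eq_sum_range]
      push_cast
      rw [← hzre]
    rw [h1]
    have h2 : (fun z : ℂ => ∑ i ∈ Finset.range N, ((p.coeff i : ℝ):ℂ) * z ^ i)
        = ∑ i ∈ Finset.range N, (fun z : ℂ => ((p.coeff i : ℝ):ℂ) * z ^ i) := by
      funext z; simp
    rw [h2, cfc_sum _ A _ (fun i _ => by fun_prop)]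
    refine Finset.sum_congr rfl (fun i _ => ?_)
    rw [cfc_const_mul _ _ A (by fun_prop), cfc_pow_id A i]
  rw [key]
  have happ : (∑ i ∈ Finset.range N, ((p.coeff i : ℝ) : ℂ) • A ^ i) δ₀
      = ∑ i ∈ Finset.range N, ((p.coeff i : ℝ) : ℂ) • ((A ^ i) δ₀) := by
    rw [ContinuousLinearMap.sum_apply]
    simp only [ContinuousLinearMap.smul_apply]
  rw [happ, inner_sum]
  have : ∀ i ∈ Finset.range N, (inner ℂ δ₀ (((p.coeff i : ℝ) : ℂ) • ((A ^ i) δ₀)) : ℂ)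
      = ((p.coeff i : ℝ):ℂ) * ((2*π:ℂ)⁻¹ * ∫ θ in (0:ℝ)..(2*π), XX c₁ c₂ θ ^ i) := by
    intro i _
    rw [inner_smul_right, hmom i]
  rw [Finset.sum_congr rfl this]
  have step : ∀ i ∈ Finset.range N,
      ((p.coeff i : ℝ):ℂ) * ((2*π:ℂ)⁻¹ * ∫ θ in (0:ℝ)..(2*π), XX c₁ c₂ θ ^ i)
      = (2*π:ℂ)⁻¹ * ∫ θ in (0:ℝ)..(2*π), ((p.coeff i : ℝ):ℂ) * XX c₁ c₂ θ ^ i := by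
    intro i _
    rw [intervalIntegral.integral_const_mul]
    ring
  rw [Finset.sum_congr rfl step, ← Finset.mul_sum]
  rw [← intervalIntegral.integral_finset_sum (f := fun i θ => ((p.coeff i : ℝ):ℂ) * XX c₁ c₂ θ ^ i) (fun i _ =>
    (Continuous.intervalIntegrable (continuous_const.mul ((XX_cont c₁ c₂).pow i)) _ _))]
  congr 1
  apply intervalIntegral.integral_congr
  intro θ _
  simp only
  rw [Polynomial.eval_eq_sum_range]
  push_cast
  refine Finset.sum_congr rfl (fun i _ => ?_)
  rw [XX]
  norm_num [Complex.ofReal_cos]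

end SpecArcsine

set_option maxHeartbeats 1600000 in
open SpecArcsine in
/-- For the self-adjoint Jacobi operator `(Af)(v) = c₁f(v) + c₂(f(v-1) + f(v+1))` on
`ℓ²(ℤ; ℂ)` and the indicator `δ₀` of the vertex `0`, the spectral measure at the root `0`
is the arcsine-type measure: `⟨δ₀, f(A)δ₀⟩ = ∫_{c₁-2c₂}^{c₁+2c₂} f(x)/(π√(4c₂² - (x-c₁)²)) dx`
for every continuous `f`, where `f(A)` is given by the continuous functional calculus
(the spectrum of the self-adjoint `A` is real, so only values of `f` on `ℝ` matter). -/
theorem spectral_measure_at_root_is_arcsine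
    (c₁ c₂ : ℝ) (hc₂ : 0 < c₂)
    (A : lp (fun _ : ℤ => ℂ) 2 →L[ℂ] lp (fun _ : ℤ => ℂ) 2)
    (hA : ∀ (f : lp (fun _ : ℤ => ℂ) 2) (v : ℤ),
      A f v = (c₁ : ℂ) * f v + (c₂ : ℂ) * (f (v - 1) + f (v + 1)))
    (hsa : IsSelfAdjoint A)
    (δ₀ : lp (fun _ : ℤ => ℂ) 2) (hδ₀ : ∀ v : ℤ, δ₀ v = if v = 0 then 1 else 0)
    (f : ℝ → ℂ) (hf : Continuous f) :
    (inner ℂ δ₀ (cfc (fun z : ℂ => f z.re) A δ₀) : ℂ)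
      = ∫ x in (c₁ - 2 * c₂)..(c₁ + 2 * c₂),
          f x * ((1 / (π * Real.sqrt (4 * c₂ ^ 2 - (x - c₁) ^ 2)) : ℝ) : ℂ) := by
  haveI : IsStarNormal A := hsa.isStarNormal
  have hspec := spec_bound c₁ c₂ hc₂ A hA hsa δ₀ hδ₀
  -- inner product with δ₀ is evaluation at 0
  have hinner : ∀ w : lp (fun _ : ℤ => ℂ) 2, (inner ℂ δ₀ w : ℂ) = w 0 := by
    intro w
    rw [lp.inner_eq_tsum]
    rw [tsum_eq_single 0 (by intro v hv; simp [RCLike.inner_apply, hδ₀ v, hv])]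
    simp [RCLike.inner_apply, hδ₀ 0]
  have hδnorm : ‖δ₀‖ = 1 := by
    have h1 : (inner ℂ δ₀ δ₀ : ℂ) = 1 := by rw [hinner, hδ₀ 0]; simp
    have h2 : RCLike.re (inner ℂ δ₀ δ₀ : ℂ) = ‖δ₀‖ ^ 2 := inner_self_eq_norm_sq δ₀
    rw [h1] at h2
    norm_num at h2
    nlinarith [norm_nonneg δ₀]
  -- moments
  have hmom : ∀ n : ℕ, (inner ℂ δ₀ ((A^n) δ₀) : ℂ)
      = (2*π:ℂ)⁻¹ * ∫ θ in (0:ℝ)..(2*π), XX c₁ c₂ θ ^ n := by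
    intro n
    rw [hinner, moment_eq c₁ c₂ A hA δ₀ hδ₀ n 0]
    congr 1
    apply intervalIntegral.integral_congr
    intro θ _
    simp [EE]
  -- polynomial case, in half-circle form
  have hpoly : ∀ p : Polynomial ℝ,
      (inner ℂ δ₀ (cfc (fun z : ℂ => ((p.eval z.re : ℝ) : ℂ)) A δ₀) : ℂ)
      = (π:ℂ)⁻¹ * ∫ θ in (0:ℝ)..π, ((p.eval (c₁ - 2*c₂*Real.cos θ) : ℝ) : ℂ) := by
    intro p
    rw [poly_inner c₁ c₂ A hsa (fun z hz => (hspec z hz).1) δ₀ hmom p]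
    rw [half_circle c₁ c₂ (fun x => ((p.eval x : ℝ):ℂ)) (by fun_prop)]
    rw [← mul_assoc]
    congr 1
    have hπ : (π:ℂ) ≠ 0 := by exact_mod_cast Real.pi_ne_zero
    field_simp
  rw [subst_lemma c₁ c₂ hc₂ f hf]
  -- approximation argument
  have key : ∀ ε : ℝ, 0 < ε →
      ‖(inner ℂ δ₀ (cfc (fun z : ℂ => f z.re) A δ₀) : ℂ)
        - (π:ℂ)⁻¹ * ∫ θ in (0:ℝ)..π, f (c₁ - 2*c₂*Real.cos θ)‖ ≤ ε := by
    intro ε hε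
    have hε4 : 0 < ε / 4 := by linarith
    obtain ⟨p, hp⟩ := exists_polynomial_near_of_continuousOn (c₁ - 2*c₂) (c₁ + 2*c₂)
      (fun x => (f x).re) (Complex.continuous_re.comp hf).continuousOn (ε/4) hε4
    obtain ⟨q, hq⟩ := exists_polynomial_near_of_continuousOn (c₁ - 2*c₂) (c₁ + 2*c₂)
      (fun x => (f x).im) (Complex.continuous_im.comp hf).continuousOn (ε/4) hε4
    set P : ℝ → ℂ := fun x => ((p.eval x : ℝ):ℂ) + Complex.I * ((q.eval x : ℝ):ℂ) with hP
    have hPdiff : ∀ x ∈ Set.Icc (c₁ - 2*c₂) (c₁ + 2*c₂), ‖f x - P x‖ ≤ ε/2 := by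
      intro x hx
      have h1 := hp x hx
      have h2 := hq x hx
      have hfx : f x = ((f x).re : ℂ) + Complex.I * ((f x).im : ℂ) := by
        rw [mul_comm]
        exact (Complex.re_add_im (f x)).symm
      calc ‖f x - P x‖
          = ‖(((f x).re - p.eval x : ℝ):ℂ) + Complex.I * (((f x).im - q.eval x : ℝ):ℂ)‖ := by
            congr 1
            conv_lhs => rw [← Complex.re_add_im (f x)]
            simp only [hP]
            push_cast
            ring
        _ ≤ ‖(((f x).re - p.eval x : ℝ):ℂ)‖ + ‖Complex.I * (((f x).im - q.eval x : ℝ):ℂ)‖ :=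
            norm_add_le _ _
        _ ≤ ε/4 + ε/4 := by
            gcongr
            · rw [Complex.norm_real]
              rw [Real.norm_eq_abs, abs_sub_comm]
              exact (le_of_lt h1)
            · rw [norm_mul, Complex.norm_I, one_mul, Complex.norm_real,
                Real.norm_eq_abs, abs_sub_comm]
              exact (le_of_lt h2)
        _ = ε/2 := by ring
    -- cfc bound
    have hcfc_eq : cfc (fun z : ℂ => f z.re) A - cfc (fun z : ℂ => P z.re) A
        = cfc (fun z : ℂ => f z.re - P z.re) A := by
      rw [cfc_sub (fun z : ℂ => f z.re) (fun z : ℂ => P z.re) A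
        (by fun_prop) (by simp only [hP]; fun_prop)]
    have hcfcP : cfc (fun z : ℂ => P z.re) A
        = cfc (fun z : ℂ => ((p.eval z.re : ℝ):ℂ)) A
          + Complex.I • cfc (fun z : ℂ => ((q.eval z.re : ℝ):ℂ)) A := by
      simp only [hP]
      rw [← cfc_const_mul Complex.I (fun z : ℂ => ((q.eval z.re : ℝ):ℂ)) A (by fun_prop),
        ← cfc_add A (fun z : ℂ => ((p.eval z.re : ℝ):ℂ))
          (fun z : ℂ => Complex.I * ((q.eval z.re : ℝ):ℂ)) (by fun_prop) (by fun_prop)]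
    have hbound1 : ‖(inner ℂ δ₀ (cfc (fun z : ℂ => f z.re) A δ₀) : ℂ)
        - (inner ℂ δ₀ (cfc (fun z : ℂ => P z.re) A δ₀) : ℂ)‖ ≤ ε/2 := by
      rw [← inner_sub_right]
      have : cfc (fun z : ℂ => f z.re) A δ₀ - cfc (fun z : ℂ => P z.re) A δ₀
          = (cfc (fun z : ℂ => f z.re - P z.re) A) δ₀ := by
        rw [← hcfc_eq, ContinuousLinearMap.sub_apply]
      rw [this]
      calc ‖(inner ℂ δ₀ ((cfc (fun z : ℂ => f z.re - P z.re) A) δ₀) : ℂ)‖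
          ≤ ‖δ₀‖ * ‖(cfc (fun z : ℂ => f z.re - P z.re) A) δ₀‖ := norm_inner_le_norm _ _
        _ ≤ ‖δ₀‖ * (‖cfc (fun z : ℂ => f z.re - P z.re) A‖ * ‖δ₀‖) := by
            gcongr
            exact ContinuousLinearMap.le_opNorm _ _
        _ = ‖cfc (fun z : ℂ => f z.re - P z.re) A‖ := by rw [hδnorm]; ring
        _ ≤ ε/2 := by
            apply norm_cfc_le (by linarith)
            intro z hz
            obtain ⟨hz1, hz2⟩ := hspec z hz
            exact hPdiff z.re hz2
    -- integral bound
    have hIcc : ∀ θ : ℝ, c₁ - 2*c₂*Real.cos θ ∈ Set.Icc (c₁ - 2*c₂) (c₁ + 2*c₂) := by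
      intro θ
      constructor
      · nlinarith [Real.cos_le_one θ]
      · nlinarith [Real.neg_one_le_cos θ]
    have hint : ∀ g : ℝ → ℂ, Continuous g →
        IntervalIntegrable (fun θ => g (c₁ - 2*c₂*Real.cos θ)) volume 0 π := by
      intro g hg
      exact (hg.comp (by fun_prop)).intervalIntegrable _ _
    have hbound2 : ‖((π:ℂ)⁻¹ * ∫ θ in (0:ℝ)..π, P (c₁ - 2*c₂*Real.cos θ))
        - (π:ℂ)⁻¹ * ∫ θ in (0:ℝ)..π, f (c₁ - 2*c₂*Real.cos θ)‖ ≤ ε/2 := by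
      rw [← mul_sub, ← intervalIntegral.integral_sub (hint P (by simp only [hP]; fun_prop))
        (hint f hf)]
      rw [norm_mul]
      have h1 : ‖((π:ℂ)⁻¹)‖ = π⁻¹ := by
        rw [norm_inv, Complex.norm_real, Real.norm_eq_abs, abs_of_pos Real.pi_pos]
      have h2 : ‖∫ θ in (0:ℝ)..π, (P (c₁ - 2*c₂*Real.cos θ) - f (c₁ - 2*c₂*Real.cos θ))‖
          ≤ (ε/2) * |π - 0| := by
        apply intervalIntegral.norm_integral_le_of_norm_le_const
        intro θ _
        rw [norm_sub_rev]
        exact hPdiff _ (hIcc θ)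
      rw [h1]
      calc π⁻¹ * ‖∫ θ in (0:ℝ)..π, (P (c₁ - 2*c₂*Real.cos θ) - f (c₁ - 2*c₂*Real.cos θ))‖
          ≤ π⁻¹ * ((ε/2) * |π - 0|) := by gcongr
        _ = ε/2 := by
            rw [sub_zero, abs_of_pos Real.pi_pos]
            field_simp
    -- P's identity
    have hPid : (inner ℂ δ₀ (cfc (fun z : ℂ => P z.re) A δ₀) : ℂ)
        = (π:ℂ)⁻¹ * ∫ θ in (0:ℝ)..π, P (c₁ - 2*c₂*Real.cos θ) := by
      rw [hcfcP]
      rw [ContinuousLinearMap.add_apply, inner_add_right, ContinuousLinearMap.smul_apply,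
        inner_smul_right, hpoly p, hpoly q]
      have : ∫ θ in (0:ℝ)..π, P (c₁ - 2*c₂*Real.cos θ)
          = (∫ θ in (0:ℝ)..π, ((p.eval (c₁ - 2*c₂*Real.cos θ) : ℝ):ℂ))
            + Complex.I * ∫ θ in (0:ℝ)..π, ((q.eval (c₁ - 2*c₂*Real.cos θ) : ℝ):ℂ) := by
        rw [← intervalIntegral.integral_const_mul,
          ← intervalIntegral.integral_add (hint (fun x => ((p.eval x : ℝ):ℂ)) (by fun_prop))
            ((hint (fun x => ((q.eval x : ℝ):ℂ)) (by fun_prop)).const_mul _)]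
      rw [this]
      ring
    calc ‖(inner ℂ δ₀ (cfc (fun z : ℂ => f z.re) A δ₀) : ℂ)
        - (π:ℂ)⁻¹ * ∫ θ in (0:ℝ)..π, f (c₁ - 2*c₂*Real.cos θ)‖
        ≤ ‖(inner ℂ δ₀ (cfc (fun z : ℂ => f z.re) A δ₀) : ℂ)
            - (inner ℂ δ₀ (cfc (fun z : ℂ => P z.re) A δ₀) : ℂ)‖
          + ‖(inner ℂ δ₀ (cfc (fun z : ℂ => P z.re) A δ₀) : ℂ)
            - (π:ℂ)⁻¹ * ∫ θ in (0:ℝ)..π, f (c₁ - 2*c₂*Real.cos θ)‖ := norm_sub_le_norm_sub_add_norm_sub _ _ _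
      _ ≤ ε/2 + ε/2 := by
          refine add_le_add hbound1 ?_
          rw [hPid]
          exact hbound2
      _ = ε := by ring
  exact sub_eq_zero.mp (norm_le_zero_iff.mp (le_of_forall_pos_le_add
    (fun ε hε => by simpa using key ε hε)))
end

section
/- Let β > 0 and γ ≥ 1, and set L₋ = β(1 - √γ)² and L₊ = β(1 + √γ)². Then ∫_{L₋}^{L₊} √((x - L₋)(L₊ - x))/(2πβx) dx = 1, i.e. the Marchenko–Pastur density is a probability density on ℝ. -/
open Real

open Set MeasureTheory in
private lemma mp_key (a b : ℝ) (ha : 0 ≤ a) (hab : a < b) :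
    ∫ x in a..b, Real.sqrt ((x - a) * (b - x)) / x
      = π * ((a + b) / 2 - Real.sqrt (a * b)) := by
  have hb : 0 < b := lt_of_le_of_lt ha hab
  have hba : 0 < b - a := sub_pos.2 hab
  set F : ℝ → ℝ := fun x => Real.sqrt ((x - a) * (b - x))
      + (a + b) / 2 * Real.arcsin ((2 * x - a - b) / (b - a))
      - Real.sqrt (a * b) * Real.arcsin (((a + b) * x - 2 * (a * b)) / ((b - a) * x)) with hFdef
  -- continuity of F on Icc a b
  have hc1 : Continuous fun x : ℝ => Real.sqrt ((x - a) * (b - x)) := by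
    exact Real.continuous_sqrt.comp (by continuity)
  have hc2 : Continuous fun x : ℝ => (a + b) / 2 * Real.arcsin ((2 * x - a - b) / (b - a)) := by
    exact continuous_const.mul (Real.continuous_arcsin.comp (by continuity))
  have hcont : ContinuousOn F (Icc a b) := by
    apply ((hc1.add hc2).continuousOn).sub
    by_cases ha0 : a = 0
    · have h0 : Real.sqrt (a * b) = 0 := by rw [ha0]; simp
      simp only [h0, zero_mul]
      exact continuousOn_const
    · have ha' : 0 < a := lt_of_le_of_ne ha (Ne.symm ha0)
      apply ContinuousOn.mul continuousOn_const
      apply Real.continuous_arcsin.comp_continuousOn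
      apply ContinuousOn.div (by fun_prop) (by fun_prop)
      intro x hx
      have : 0 < x := lt_of_lt_of_le ha' hx.1
      positivity
  -- derivative of F on Ioo a b
  have hderiv : ∀ x ∈ Ioo a b, HasDerivAt F (Real.sqrt ((x - a) * (b - x)) / x) x := by
    intro x hx
    have hxa : 0 < x - a := sub_pos.2 hx.1
    have hbx : 0 < b - x := sub_pos.2 hx.2
    have hx0 : 0 < x := lt_of_le_of_lt ha hx.1
    have hp : 0 < (x - a) * (b - x) := mul_pos hxa hbx
    have hsp : 0 < Real.sqrt ((x - a) * (b - x)) := Real.sqrt_pos.2 hp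
    have hss : Real.sqrt ((x - a) * (b - x)) * Real.sqrt ((x - a) * (b - x)) = (x - a) * (b - x) :=
      Real.mul_self_sqrt hp.le
    -- piece 1
    have hq : HasDerivAt (fun x => (x - a) * (b - x)) (a + b - 2 * x) x := by
      have h := ((hasDerivAt_id x).sub_const a).mul ((hasDerivAt_const x b).sub (hasDerivAt_id x))
      simp only [id_eq] at h
      refine h.congr_deriv (Eq.symm ?_)
      simp only [Pi.sub_apply, id_eq]
      ring
    have h1 : HasDerivAt (fun x => Real.sqrt ((x - a) * (b - x)))
        ((a + b - 2 * x) / (2 * Real.sqrt ((x - a) * (b - x)))) x := hq.sqrt hp.ne'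
    -- piece 2
    have hv : HasDerivAt (fun x => (2 * x - a - b) / (b - a)) (2 / (b - a)) x := by
      have h := ((((hasDerivAt_id x).const_mul (2:ℝ)).sub_const a).sub_const b).div_const (b - a)
      simpa using h
    have hv1 : (2 * x - a - b) / (b - a) < 1 := (div_lt_one hba).2 (by linarith [hx.2])
    have hv2 : -1 < (2 * x - a - b) / (b - a) := by
      rw [lt_div_iff₀ hba]; linarith [hx.1]
    have hsv : Real.sqrt (1 - ((2 * x - a - b) / (b - a)) ^ 2)
        = 2 * Real.sqrt ((x - a) * (b - x)) / (b - a) := by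
      have hM : (2 * Real.sqrt ((x - a) * (b - x))) ^ 2 = 4 * ((x - a) * (b - x)) := by
        rw [mul_pow, Real.sq_sqrt hp.le]; norm_num
      rw [show 1 - ((2 * x - a - b) / (b - a)) ^ 2
          = (2 * Real.sqrt ((x - a) * (b - x)) / (b - a)) ^ 2 by
        rw [div_pow, div_pow, hM]
        field_simp
        ring]
      exact Real.sqrt_sq (by positivity)
    have h2 : HasDerivAt (fun x => (a + b) / 2 * Real.arcsin ((2 * x - a - b) / (b - a)))
        ((a + b) / (2 * Real.sqrt ((x - a) * (b - x)))) x := by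
      have harc := (Real.hasDerivAt_arcsin hv2.ne' hv1.ne).comp x hv
      have := harc.const_mul ((a + b) / 2)
      refine this.congr_deriv (Eq.symm ?_)
      rw [hsv]
      field_simp
    -- piece 3
    have h3 : HasDerivAt
        (fun x => Real.sqrt (a * b) * Real.arcsin (((a + b) * x - 2 * (a * b)) / ((b - a) * x)))
        (a * b / (x * Real.sqrt ((x - a) * (b - x)))) x := by
      by_cases ha0 : a = 0
      · have h0 : Real.sqrt (a * b) = 0 := by rw [ha0]; simp
        have hfun : (fun x => Real.sqrt (a * b)
            * Real.arcsin (((a + b) * x - 2 * (a * b)) / ((b - a) * x))) = fun _ : ℝ => (0:ℝ) := by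
          funext y; rw [h0, zero_mul]
        rw [hfun, ha0]
        simpa using hasDerivAt_const x (0:ℝ)
      · have ha' : 0 < a := lt_of_le_of_ne ha (Ne.symm ha0)
        have hab0 : 0 < a * b := mul_pos ha' hb
        have hden : ((b - a) * x) ≠ 0 := by positivity
        have hw : HasDerivAt (fun x => ((a + b) * x - 2 * (a * b)) / ((b - a) * x))
            (2 * (a * b) / ((b - a) * x ^ 2)) x := by
          have hnum : HasDerivAt (fun x => (a + b) * x - 2 * (a * b)) (a + b) x := by
            simpa using ((hasDerivAt_id x).const_mul (a + b)).sub_const (2 * (a * b))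
          have hden' : HasDerivAt (fun x => (b - a) * x) (b - a) x := by
            simpa using (hasDerivAt_id x).const_mul (b - a)
          have h := hnum.div hden' hden
          refine h.congr_deriv (Eq.symm ?_)
          field_simp
          ring
        have hkey : ((b - a) * x) ^ 2 - ((a + b) * x - 2 * (a * b)) ^ 2
            = 4 * (a * b) * ((x - a) * (b - x)) := by ring
        have hw2 : (((a + b) * x - 2 * (a * b)) / ((b - a) * x)) ^ 2 < 1 := by
          rw [div_pow, div_lt_one (by positivity)]
          nlinarith [mul_pos hab0 hp]
        have hwlt : ((a + b) * x - 2 * (a * b)) / ((b - a) * x) < 1 := by nlinarith [hw2]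
        have hwgt : -1 < ((a + b) * x - 2 * (a * b)) / ((b - a) * x) := by nlinarith [hw2]
        have hsw : Real.sqrt (1 - (((a + b) * x - 2 * (a * b)) / ((b - a) * x)) ^ 2)
            = 2 * Real.sqrt (a * b) * Real.sqrt ((x - a) * (b - x)) / ((b - a) * x) := by
          have hM : (2 * Real.sqrt (a * b) * Real.sqrt ((x - a) * (b - x))) ^ 2
              = 4 * (a * b) * ((x - a) * (b - x)) := by
            rw [mul_pow, mul_pow, Real.sq_sqrt hp.le, Real.sq_sqrt hab0.le]; ring
          rw [show 1 - (((a + b) * x - 2 * (a * b)) / ((b - a) * x)) ^ 2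
              = (2 * Real.sqrt (a * b) * Real.sqrt ((x - a) * (b - x)) / ((b - a) * x)) ^ 2 by
            rw [div_pow, div_pow, hM]
            field_simp
            ring]
          exact Real.sqrt_sq (by positivity)
        have harc := (Real.hasDerivAt_arcsin hwgt.ne' hwlt.ne).comp x hw
        have h := harc.const_mul (Real.sqrt (a * b))
        refine h.congr_deriv (Eq.symm ?_)
        rw [hsw]
        have hsabne : Real.sqrt (a * b) ≠ 0 := by positivity
        set s := Real.sqrt ((x - a) * (b - x)) with hs'
        set t := Real.sqrt (a * b) with ht'
        field_simp
    have htot := (h1.add h2).sub h3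
    refine htot.congr_deriv (Eq.symm ?_)
    set s := Real.sqrt ((x - a) * (b - x)) with hs'
    field_simp
    linear_combination 2 * hss
  -- integrability
  have hint : IntervalIntegrable (fun x => Real.sqrt ((x - a) * (b - x)) / x) volume a b := by
    by_cases ha0 : a = 0
    · subst ha0
      have hg : IntervalIntegrable (fun x : ℝ => Real.sqrt (b - x) * x ^ (-(1/2) : ℝ))
          volume 0 b :=
        (intervalIntegral.intervalIntegrable_rpow' (by norm_num)).continuousOn_mul
          (Real.continuous_sqrt.comp (continuous_const.sub continuous_id)).continuousOn
      have heq : ∀ x : ℝ, Real.sqrt ((x - 0) * (b - x)) / x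
          = Real.sqrt (b - x) * x ^ (-(1/2) : ℝ) := by
        intro x
        rcases lt_trichotomy x 0 with h | h | h
        · rw [Real.rpow_def_of_neg h,
            show ((-(1/2):ℝ) * π) = -(π/2) by ring, Real.cos_neg, Real.cos_pi_div_two]
          rw [Real.sqrt_eq_zero_of_nonpos (by nlinarith)]
          simp
        · subst h; simp
        · rw [sub_zero, Real.sqrt_mul h.le, Real.rpow_neg h.le, ← Real.sqrt_eq_rpow]
          rw [← Real.mul_self_sqrt h.le]
          have hs : Real.sqrt x ≠ 0 := by positivity
          field_simp
          rw [Real.sqrt_sq (Real.sqrt_nonneg x)]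
      simp_rw [heq]
      exact hg
    · have ha' : 0 < a := lt_of_le_of_ne ha (Ne.symm ha0)
      apply ContinuousOn.intervalIntegrable
      apply ContinuousOn.div (hc1.continuousOn) continuousOn_id
      intro x hx
      rw [uIcc_of_le hab.le] at hx
      exact ne_of_gt (lt_of_lt_of_le ha' hx.1)
  rw [intervalIntegral.integral_eq_sub_of_hasDerivAt_of_le hab.le hcont hderiv hint]
  -- evaluate F b - F a
  have hFb : F b = (a + b) / 2 * (π / 2) - Real.sqrt (a * b) * (π / 2) := by
    rw [hFdef]
    simp only
    rw [show (2 * b - a - b) / (b - a) = 1 by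
        rw [show 2 * b - a - b = b - a by ring, div_self hba.ne']]
    rw [show ((a + b) * b - 2 * (a * b)) / ((b - a) * b) = 1 by
        rw [show (a + b) * b - 2 * (a * b) = (b - a) * b by ring, div_self (by positivity)]]
    rw [Real.arcsin_one]
    simp
  have hFa : F a = -((a + b) / 2 * (π / 2)) + Real.sqrt (a * b) * (π / 2) := by
    rw [hFdef]
    simp only
    rw [show (2 * a - a - b) / (b - a) = -1 by
        rw [show 2 * a - a - b = -(b - a) by ring, neg_div, div_self hba.ne']]
    rw [Real.arcsin_neg_one]
    by_cases ha0 : a = 0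
    · have h0 : Real.sqrt (a * b) = 0 := by rw [ha0]; simp
      rw [h0]
      simp
    · have ha' : 0 < a := lt_of_le_of_ne ha (Ne.symm ha0)
      rw [show ((a + b) * a - 2 * (a * b)) / ((b - a) * a) = -1 by
          rw [show (a + b) * a - 2 * (a * b) = -((b - a) * a) by ring, neg_div,
            div_self (by positivity)]]
      rw [Real.arcsin_neg_one]
      simp
  rw [hFb, hFa]
  ring

/-- The Marchenko–Pastur density with parameters `β > 0`, `γ ≥ 1` integrates to `1`,
where `L₋ = β(1-√γ)²` and `L₊ = β(1+√γ)²`. -/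
theorem marchenko_pastur_density_integrates_to_one (β γ : ℝ) (hβ : 0 < β) (hγ : 1 ≤ γ) :
    ∫ x in (β * (1 - Real.sqrt γ) ^ 2)..(β * (1 + Real.sqrt γ) ^ 2),
        Real.sqrt ((x - β * (1 - Real.sqrt γ) ^ 2) * (β * (1 + Real.sqrt γ) ^ 2 - x))
          / (2 * π * β * x) = 1 := by
  set a := β * (1 - Real.sqrt γ) ^ 2 with ha_def
  set b := β * (1 + Real.sqrt γ) ^ 2 with hb_def
  have hγ0 : (0:ℝ) ≤ γ := le_trans zero_le_one hγ
  have hs : Real.sqrt γ ^ 2 = γ := Real.sq_sqrt hγ0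
  have hs1 : 1 ≤ Real.sqrt γ := by
    nlinarith [Real.sqrt_nonneg γ, hs]
  have ha : 0 ≤ a := by positivity
  have hab : a < b := by
    rw [ha_def, hb_def]
    nlinarith
  have hπ : π ≠ 0 := Real.pi_ne_zero
  have hkey := mp_key a b ha hab
  have hrw : ∀ x : ℝ, Real.sqrt ((x - a) * (b - x)) / (2 * π * β * x)
      = (Real.sqrt ((x - a) * (b - x)) / x) / (2 * π * β) := by
    intro x
    rw [div_div]
    ring
  simp_rw [hrw]
  rw [intervalIntegral.integral_div, hkey]
  have hab2 : a * b = (β * (γ - 1)) ^ 2 := by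
    rw [ha_def, hb_def, show β * (1 - Real.sqrt γ) ^ 2 * (β * (1 + Real.sqrt γ) ^ 2)
        = β ^ 2 * ((1 - Real.sqrt γ) * (1 + Real.sqrt γ)) ^ 2 by ring,
      show (1 - Real.sqrt γ) * (1 + Real.sqrt γ) = 1 - γ by nlinarith]
    ring
  rw [hab2, Real.sqrt_sq (by nlinarith)]
  have hsum : (a + b) / 2 = β * (1 + γ) := by
    rw [ha_def, hb_def]; nlinarith
  rw [hsum]
  field_simp
  ring
end
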